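/- arXiv:2310.06658 — 3 statements merged into one kernel-verified Lean document; each statement's English description precedes it below -/
import Mathlib

section
/- Let (u, μ) be a pair in 𝒟 and suppose the distribution ω = u − u'' is a positive Borel measure ν on ℝ, i.e. ∫_ℝ h dν = ∫_ℝ u h dx + ∫_ℝ u' h' dx for every compactly supported h ∈ H¹(ℝ). Then the function x ↦ e^{−x}(u(x) + u'(x)) has a representative (equal to it Lebesgue-almost everywhere) that is non-increasing and non-negative on ℝ and tends to 0 as x → ∞. -/
open MeasureTheory Filter Set
open scoped Topology

noncomputable section

/-- An element of the phase space `𝒟`: a pair `(u, μ)` where `u ∈ H¹_loc(ℝ)` (recorded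
together with a derivative `u'`), `μ` is a positive Borel measure dominating
`(u² + u'²) dx` and `υ` is the excess measure, subject to the growth restrictions
at `-∞` and `+∞`. -/
structure PhaseD where
  u : ℝ → ℝ
  u' : ℝ → ℝ
  μ : Measure ℝ
  υ : Measure ℝ
  meas_u' : Measurable u'
  ftc : ∀ a b : ℝ, u b - u a = ∫ x in a..b, u' x
  locInt : LocallyIntegrable u' volume
  locSq : LocallyIntegrable (fun x => (u' x) ^ 2) volume
  decomp : μ = υ + volume.withDensity (fun x => ENNReal.ofReal ((u x) ^ 2 + (u' x) ^ 2))
  minusCond :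
    (∫⁻ s in Iio (0 : ℝ), ENNReal.ofReal (Real.exp (-s) * ((u s) ^ 2 + (u' s) ^ 2))) +
      (∫⁻ s in Iio (0 : ℝ), ENNReal.ofReal (Real.exp (-s)) ∂υ) < ⊤
  plusCond :
    Filter.limsup (fun x : ℝ =>
      ENNReal.ofReal (Real.exp x) *
        ((∫⁻ s in Ioi x, ENNReal.ofReal (Real.exp (-s) * (u s + u' s) ^ 2)) +
          ∫⁻ s in Ici x, ENNReal.ofReal (Real.exp (-s)) ∂υ)) Filter.atTop < ⊤

/-- The function `w̃(x) = -(u(log x) + u'(log x))/x`. -/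
def tildeW (D : PhaseD) : ℝ → ℝ := fun x => -(D.u (Real.log x) + D.u' (Real.log x)) / x

/-- The measure `υ̃`, i.e. the pushforward under `exp` of `e^{-s} dυ(s)`, so that
`υ̃(B) = ∫_{log B} e^{-s} dυ(s)` for Borel `B ⊆ (0,∞)` and `υ̃({0}) = 0`. -/
def tildeV (D : PhaseD) : Measure ℝ :=
  (D.υ.withDensity fun s => ENNReal.ofReal (Real.exp (-s))).map Real.exp

/-- Convergence of a sequence of pairs to a pair in `𝒟`. -/
def ConvD (Dk : ℕ → PhaseD) (D : PhaseD) : Prop :=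
  (∀ x : ℝ, Tendsto (fun k => (Dk k).u x) atTop (nhds (D.u x))) ∧
    ∀ᵐ x : ℝ ∂volume,
      Tendsto (fun k => ∫⁻ s in Iio x, ENNReal.ofReal (Real.exp (-s)) ∂(Dk k).μ) atTop
        (nhds (∫⁻ s in Iio x, ENNReal.ofReal (Real.exp (-s)) ∂D.μ))

/-- The functional `E(u,μ)`. -/
def Efun (D : PhaseD) : ENNReal :=
  ⨆ x : ℝ, ENNReal.ofReal (Real.exp (x / 2)) *
    ((∫⁻ s in Ioi x, ENNReal.ofReal (Real.exp (-s) * (D.u s + D.u' s) ^ 2)) +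
      ∫⁻ s in Ici x, ENNReal.ofReal (Real.exp (-s)) ∂D.υ) ^ (1 / 2 : ℝ)


/-- A compactly supported test function `h ∈ H¹_c(ℝ)`, recorded with its derivative. -/
def TestH1 (h h' : ℝ → ℝ) : Prop :=
  HasCompactSupport h ∧ Measurable h' ∧
    (∀ a b : ℝ, h b - h a = ∫ x in a..b, h' x) ∧ MemLp h' 2 volume

/-- The distribution `ω = u - u''` equals the positive Borel measure `ν`, i.e.
`∫ h dν = ∫ u h dx + ∫ u' h' dx` for every compactly supported `h ∈ H¹(ℝ)`. -/
def PosMeasRepr (D : PhaseD) (ν : Measure ℝ) : Prop :=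
  ∀ h h' : ℝ → ℝ, TestH1 h h' →
    ∫ x, h x ∂ν = (∫ x, D.u x * h x) + ∫ x, D.u' x * h' x
namespace St13

lemma boundedII {ψ' : ℝ → ℝ} {C : ℝ} (hm : Measurable ψ') (hb : ∀ s, |ψ' s| ≤ C) (a b : ℝ) :
    IntervalIntegrable ψ' volume a b := by
  constructor <;>
  · refine Integrable.mono' (g := fun _ => C) (integrableOn_const measure_Ioc_lt_top.ne)
      hm.aestronglyMeasurable ?_
    exact Eventually.of_forall fun s => by simpa [Real.norm_eq_abs] using hb s

lemma cont_of_ftc {u u' : ℝ → ℝ} (hint : ∀ a b : ℝ, IntervalIntegrable u' volume a b)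
    (hu : ∀ a b : ℝ, u b - u a = ∫ t in a..b, u' t) : Continuous u := by
  have : u = fun t => u 0 + ∫ s in (0:ℝ)..t, u' s := funext fun t => by
    have := hu 0 t; linarith
  rw [this]
  exact continuous_const.add (intervalIntegral.continuous_primitive hint 0)

lemma ibp {u u' ψ ψ' : ℝ → ℝ} {C : ℝ}
    (hu'm : Measurable u') (hu'loc : LocallyIntegrable u' volume)
    (hu : ∀ a b : ℝ, u b - u a = ∫ t in a..b, u' t)
    (hψ'm : Measurable ψ') (hψ'bd : ∀ s, |ψ' s| ≤ C)
    (hψ : ∀ a b : ℝ, ψ b - ψ a = ∫ t in a..b, ψ' t)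
    {a b : ℝ} (hab : a ≤ b) :
    ∫ t in Ioc a b, u' t * ψ t =
      u b * ψ b - u a * ψ a - ∫ t in Ioc a b, u t * ψ' t := by
  have hψ'int : ∀ a' b' : ℝ, IntervalIntegrable ψ' volume a' b' := boundedII hψ'm hψ'bd
  have hψc : Continuous ψ := cont_of_ftc hψ'int hψ
  have hu'int : ∀ a' b' : ℝ, IntervalIntegrable u' volume a' b' := fun a' b' =>
    (hu'loc.integrableOn_isCompact isCompact_uIcc).intervalIntegrable
  have huc : Continuous u := cont_of_ftc hu'int hu
  have hu'Ioc : IntegrableOn u' (Ioc a b) volume :=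
    (intervalIntegrable_iff_integrableOn_Ioc_of_le hab).1 (hu'int a b)
  have hψ'Ioc : IntegrableOn ψ' (Ioc a b) volume :=
    (intervalIntegrable_iff_integrableOn_Ioc_of_le hab).1 (hψ'int a b)
  have hu'psia : IntegrableOn (fun t => u' t * (ψ t - ψ a)) (Ioc a b) volume :=
    ((hu'loc.integrableOn_isCompact isCompact_Icc).mul_continuousOn
      (hψc.sub continuous_const).continuousOn isCompact_Icc).mono_set Ioc_subset_Icc_self
  have hupsi' : IntegrableOn (fun t => u t * ψ' t) (Ioc a b) volume := by
    have h1 : IntegrableOn (fun t => ψ' t * u t) (Ioc a b) volume :=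
      Integrable.bdd_mul (c := C)
        ((huc.integrableOn_Icc).mono_set Ioc_subset_Icc_self)
        hψ'm.aestronglyMeasurable
        (Eventually.of_forall fun s => by simpa [Real.norm_eq_abs] using hψ'bd s)
    simpa [mul_comm] using h1
  have hubpsi' : IntegrableOn (fun t => ψ' t * u b) (Ioc a b) volume := hψ'Ioc.mul_const _
  -- the Fubini kernel
  set q : ℝ × ℝ → ℝ := fun p => if p.1 ≤ p.2 then ψ' p.1 * u' p.2 else 0 with hqdef
  have qmeas : Measurable q :=
    Measurable.ite (measurableSet_le measurable_fst measurable_snd)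
      ((hψ'm.comp measurable_fst).mul (hu'm.comp measurable_snd)) measurable_const
  have qint : Integrable q ((volume.restrict (Ioc a b)).prod (volume.restrict (Ioc a b))) := by
    refine Integrable.mono' (g := fun p => C * |u' p.2|) ?_ qmeas.aestronglyMeasurable ?_
    · have hc : Integrable (fun _ : ℝ => C) (volume.restrict (Ioc a b)) :=
        integrableOn_const measure_Ioc_lt_top.ne
      simpa using hc.mul_prod hu'Ioc.abs
    · refine Eventually.of_forall fun p => ?_
      by_cases h : p.1 ≤ p.2
      · simp only [hqdef, h, if_true, Real.norm_eq_abs, abs_mul]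
        exact mul_le_mul_of_nonneg_right (hψ'bd _) (abs_nonneg _)
      · simp only [hqdef, h, if_false, Real.norm_eq_abs, abs_zero]
        have : (0:ℝ) ≤ |u' p.2| := abs_nonneg _
        have hC : 0 ≤ C := le_trans (abs_nonneg _) (hψ'bd 0)
        positivity
  have swap : (∫ s in Ioc a b, ∫ t in Ioc a b, q (s, t)) =
      ∫ t in Ioc a b, ∫ s in Ioc a b, q (s, t) := by
    have := integral_integral_swap (f := fun s t => q (s, t))
      (μ := volume.restrict (Ioc a b)) (ν := volume.restrict (Ioc a b)) ?_
    · exact this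
    · exact qint
  have LHSeq : ∀ s ∈ Ioc a b, (∫ t in Ioc a b, q (s, t)) = ψ' s * (u b - u s) := by
    intro s hs
    have hfun : (fun t => q (s, t)) = fun t => ψ' s * ((Ici s).indicator u' t) := by
      funext t; by_cases h : s ≤ t <;> simp [hqdef, h, indicator, mem_Ici]
    have hset : Ioc a b ∩ Ici s = Icc s b := by
      ext t
      simp only [mem_Ioc, mem_Icc, mem_Ici, mem_inter_iff]
      obtain ⟨h1, h2⟩ := hs
      constructor
      · rintro ⟨⟨_, h4⟩, h5⟩; exact ⟨h5, h4⟩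
      · rintro ⟨h3, h4⟩; exact ⟨⟨lt_of_lt_of_le h1 h3, h4⟩, h3⟩
    rw [hfun, integral_const_mul, setIntegral_indicator measurableSet_Ici, hset,
      integral_Icc_eq_integral_Ioc, ← intervalIntegral.integral_of_le hs.2, ← hu s b]
  have RHSeq : ∀ t ∈ Ioc a b, (∫ s in Ioc a b, q (s, t)) = (ψ t - ψ a) * u' t := by
    intro t ht
    have hfun : (fun s => q (s, t)) = fun s => ((Iic t).indicator ψ' s) * u' t := by
      funext s; by_cases h : s ≤ t <;> simp [hqdef, h, indicator, mem_Iic]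
    have hset : Ioc a b ∩ Iic t = Ioc a t := by
      ext s
      simp only [mem_Ioc, mem_Iic, mem_inter_iff]
      obtain ⟨h1, h2⟩ := ht
      constructor
      · rintro ⟨⟨h3, _⟩, h5⟩; exact ⟨h3, h5⟩
      · rintro ⟨h3, h4⟩; exact ⟨⟨h3, le_trans h4 h2⟩, h4⟩
    rw [hfun, integral_mul_const, setIntegral_indicator measurableSet_Iic, hset,
      ← intervalIntegral.integral_of_le (le_of_lt ht.1), ← hψ a t]
  have key : ∫ t in Ioc a b, (ψ t - ψ a) * u' t = ∫ s in Ioc a b, ψ' s * (u b - u s) := by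
    rw [← setIntegral_congr_fun measurableSet_Ioc RHSeq,
      ← setIntegral_congr_fun measurableSet_Ioc LHSeq]
    exact swap.symm
  have hintu' : ∫ t in Ioc a b, u' t = u b - u a := by
    rw [← intervalIntegral.integral_of_le hab, ← hu]
  have hintψ' : ∫ t in Ioc a b, ψ' t = ψ b - ψ a := by
    rw [← intervalIntegral.integral_of_le hab, ← hψ]
  -- expand both sides of key
  have expand1 : ∫ t in Ioc a b, (ψ t - ψ a) * u' t
      = (∫ t in Ioc a b, u' t * ψ t) - ψ a * (u b - u a) := by
    have e : ∀ t, (ψ t - ψ a) * u' t = u' t * (ψ t - ψ a) := fun t => mul_comm _ _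
    simp_rw [e]
    have : ∀ t, u' t * (ψ t - ψ a) = u' t * ψ t - ψ a * u' t := fun t => by ring
    simp_rw [this]
    rw [MeasureTheory.integral_sub]
    · rw [integral_const_mul, hintu']
    · have : IntegrableOn (fun t => u' t * ψ t) (Ioc a b) volume :=
        ((hu'loc.integrableOn_isCompact isCompact_Icc).mul_continuousOn
          hψc.continuousOn isCompact_Icc).mono_set Ioc_subset_Icc_self
      exact this
    · exact hu'Ioc.const_mul _
  have expand2 : ∫ s in Ioc a b, ψ' s * (u b - u s)
      = (ψ b - ψ a) * u b - ∫ s in Ioc a b, u s * ψ' s := by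
    have : ∀ s, ψ' s * (u b - u s) = ψ' s * u b - u s * ψ' s := fun s => by ring
    simp_rw [this]
    rw [MeasureTheory.integral_sub hubpsi' hupsi', integral_mul_const, hintψ']
  rw [expand1, expand2] at key
  linarith [key]


def phi (x y z : ℝ) : ℝ → ℝ := fun t => max 0 (min ((t - x) / (y - x)) ((z - t) / (z - y)))

def phid (x y z : ℝ) : ℝ → ℝ := fun t =>
  if t ∈ Ioc x y then (y - x)⁻¹ else if t ∈ Ioc y z then -(z - y)⁻¹ else 0

def tenth (x y z : ℝ) : ℝ → ℝ := fun t => Real.exp (-t) * phi x y z t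

def tenthd (x y z : ℝ) : ℝ → ℝ := fun t => Real.exp (-t) * (phid x y z t - phi x y z t)

variable {x y z : ℝ} (hxy : x < y) (hyz : y < z)

lemma phi_cont : Continuous (phi x y z) := by
  unfold phi; fun_prop

lemma phi_nonneg (t : ℝ) : 0 ≤ phi x y z t := le_max_left _ _

include hxy hyz

lemma phi_le_one (t : ℝ) : phi x y z t ≤ 1 := by
  unfold phi
  rcases le_total t y with h | h
  · refine max_le (by norm_num) ((min_le_left _ _).trans ?_)
    rw [div_le_one (by linarith)]; linarith
  · refine max_le (by norm_num) ((min_le_right _ _).trans ?_)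
    rw [div_le_one (by linarith)]; linarith

lemma phi_eq_zero_left {t : ℝ} (ht : t ≤ x) : phi x y z t = 0 := by
  unfold phi
  have h1 : (t - x) / (y - x) ≤ 0 :=
    div_nonpos_of_nonpos_of_nonneg (by linarith) (by linarith)
  exact max_eq_left ((min_le_left _ _).trans h1)

lemma phi_eq_zero_right {t : ℝ} (ht : z ≤ t) : phi x y z t = 0 := by
  unfold phi
  have h1 : (z - t) / (z - y) ≤ 0 :=
    div_nonpos_of_nonpos_of_nonneg (by linarith) (by linarith)
  exact max_eq_left ((min_le_right _ _).trans h1)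

lemma phi_eq_on_left {t : ℝ} (h1 : x ≤ t) (h2 : t ≤ y) : phi x y z t = (t - x) / (y - x) := by
  unfold phi
  have hmin : min ((t - x) / (y - x)) ((z - t) / (z - y)) = (t - x) / (y - x) := by
    refine min_eq_left ?_
    have ha : (t - x) / (y - x) ≤ 1 := by rw [div_le_one (by linarith)]; linarith
    have hb : (1:ℝ) ≤ (z - t) / (z - y) := by rw [le_div_iff₀ (by linarith)]; linarith
    linarith
  rw [hmin]
  exact max_eq_right (div_nonneg (by linarith) (by linarith))

lemma phi_eq_on_right {t : ℝ} (h1 : y ≤ t) (h2 : t ≤ z) : phi x y z t = (z - t) / (z - y) := by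
  unfold phi
  have hmin : min ((t - x) / (y - x)) ((z - t) / (z - y)) = (z - t) / (z - y) := by
    refine min_eq_right ?_
    have ha : (z - t) / (z - y) ≤ 1 := by rw [div_le_one (by linarith)]; linarith
    have hb : (1:ℝ) ≤ (t - x) / (y - x) := by rw [le_div_iff₀ (by linarith)]; linarith
    linarith
  rw [hmin]
  exact max_eq_right (div_nonneg (by linarith) (by linarith))

omit hxy hyz

lemma phid_abs_le (hxy : x < y) (hyz : y < z) (t : ℝ) :
    |phid x y z t| ≤ (y - x)⁻¹ + (z - y)⁻¹ := by
  have h1 : (0:ℝ) ≤ (y - x)⁻¹ := inv_nonneg.2 (by linarith)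
  have h2 : (0:ℝ) ≤ (z - y)⁻¹ := inv_nonneg.2 (by linarith)
  unfold phid
  split_ifs
  · rw [abs_of_nonneg h1]; linarith
  · rw [abs_neg, abs_of_nonneg h2]; linarith
  · rw [abs_zero]; linarith

lemma tenth_cont : Continuous (tenth x y z) :=
  (Real.continuous_exp.comp continuous_neg).mul phi_cont

lemma phid_meas : Measurable (phid x y z) :=
  Measurable.ite measurableSet_Ioc measurable_const
    (Measurable.ite measurableSet_Ioc measurable_const measurable_const)

lemma tenthd_meas : Measurable (tenthd x y z) :=
  (Real.measurable_exp.comp measurable_neg).mul (phid_meas.sub phi_cont.measurable)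

include hxy hyz

lemma phid_eq_zero_left {t : ℝ} (ht : t ≤ x) : phid x y z t = 0 := by
  unfold phid
  rw [if_neg, if_neg]
  · rintro ⟨h1, -⟩; linarith
  · rintro ⟨h1, -⟩; linarith

lemma phid_eq_zero_right {t : ℝ} (ht : z < t) : phid x y z t = 0 := by
  unfold phid
  rw [if_neg, if_neg]
  · rintro ⟨-, h2⟩; linarith
  · rintro ⟨-, h2⟩; linarith

lemma tenth_eq_zero_left {t : ℝ} (ht : t ≤ x) : tenth x y z t = 0 := by
  simp [tenth, phi_eq_zero_left hxy hyz ht]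

lemma tenth_eq_zero_right {t : ℝ} (ht : z ≤ t) : tenth x y z t = 0 := by
  simp [tenth, phi_eq_zero_right hxy hyz ht]

lemma tenthd_eq_zero_left {t : ℝ} (ht : t ≤ x) : tenthd x y z t = 0 := by
  simp [tenthd, phi_eq_zero_left hxy hyz ht, phid_eq_zero_left hxy hyz ht]

lemma tenthd_eq_zero_right {t : ℝ} (ht : z < t) : tenthd x y z t = 0 := by
  simp [tenthd, phi_eq_zero_right hxy hyz ht.le, phid_eq_zero_right hxy hyz ht]

lemma tenthd_abs_le (t : ℝ) :
    |tenthd x y z t| ≤ Real.exp (-x) * ((y - x)⁻¹ + (z - y)⁻¹ + 1) := by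
  have hC : (0:ℝ) ≤ (y - x)⁻¹ + (z - y)⁻¹ + 1 := by
    have h1 : (0:ℝ) ≤ (y - x)⁻¹ := inv_nonneg.2 (by linarith)
    have h2 : (0:ℝ) ≤ (z - y)⁻¹ := inv_nonneg.2 (by linarith)
    linarith
  rcases le_total t x with ht | ht
  · rw [tenthd_eq_zero_left hxy hyz ht, abs_zero]
    positivity
  · have hexp : Real.exp (-t) ≤ Real.exp (-x) := Real.exp_le_exp.2 (by linarith)
    have h0 : |tenthd x y z t| ≤ Real.exp (-t) * ((y - x)⁻¹ + (z - y)⁻¹ + 1) := by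
      unfold tenthd
      rw [abs_mul, abs_of_pos (Real.exp_pos _)]
      refine mul_le_mul_of_nonneg_left ?_ (Real.exp_pos _).le
      calc |phid x y z t - phi x y z t| ≤ |phid x y z t| + |phi x y z t| := abs_sub _ _
        _ ≤ ((y - x)⁻¹ + (z - y)⁻¹) + 1 := by
            refine add_le_add (phid_abs_le hxy hyz t) ?_
            rw [abs_of_nonneg (phi_nonneg t)]
            exact phi_le_one hxy hyz t
        _ = (y - x)⁻¹ + (z - y)⁻¹ + 1 := by ring
    exact h0.trans (mul_le_mul_of_nonneg_right hexp hC)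

lemma tenth_hasDeriv {t : ℝ} (ht : t ∉ ({x, y, z} : Set ℝ)) :
    HasDerivAt (tenth x y z) (tenthd x y z t) t := by
  have htx : t ≠ x := fun h => ht (by simp [h])
  have hty : t ≠ y := fun h => ht (by simp [h])
  have htz : t ≠ z := fun h => ht (by simp [h])
  have hexp : HasDerivAt (fun s : ℝ => Real.exp (-s)) (-Real.exp (-t)) t := by
    have h1 : HasDerivAt (fun s : ℝ => -s) (-1 : ℝ) t := (hasDerivAt_id t).neg
    have := (Real.hasDerivAt_exp (-t)).comp t h1
    exact this.congr_deriv (by ring)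
  rcases lt_trichotomy t x with h1 | h1 | h1
  · -- t < x : locally zero
    have hz : tenthd x y z t = 0 := tenthd_eq_zero_left hxy hyz h1.le
    rw [hz]
    refine (hasDerivAt_const t (0:ℝ)).congr_of_eventuallyEq ?_
    filter_upwards [Iio_mem_nhds h1] with s hs
    exact tenth_eq_zero_left hxy hyz (le_of_lt hs)
  · exact absurd h1 htx
  rcases lt_trichotomy t y with h2 | h2 | h2
  · -- x < t < y
    have hlin : HasDerivAt (fun s : ℝ => (s - x) / (y - x)) (1 / (y - x)) t :=
      ((hasDerivAt_id t).sub_const x).div_const (y - x)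
    have hψ : HasDerivAt (fun s : ℝ => Real.exp (-s) * ((s - x) / (y - x)))
        (-Real.exp (-t) * ((t - x) / (y - x)) + Real.exp (-t) * (1 / (y - x))) t :=
      hexp.mul hlin
    have heq : tenthd x y z t
        = -Real.exp (-t) * ((t - x) / (y - x)) + Real.exp (-t) * (1 / (y - x)) := by
      unfold tenthd
      rw [phi_eq_on_left hxy hyz h1.le h2.le,
        show phid x y z t = (y - x)⁻¹ from if_pos ⟨h1, h2.le⟩]
      rw [inv_eq_one_div]
      ring
    rw [heq]
    refine hψ.congr_of_eventuallyEq ?_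
    filter_upwards [Ioo_mem_nhds h1 h2] with s hs
    simp [tenth, phi_eq_on_left hxy hyz hs.1.le hs.2.le]
  · exact absurd h2 hty
  rcases lt_trichotomy t z with h3 | h3 | h3
  · -- y < t < z
    have hlin : HasDerivAt (fun s : ℝ => (z - s) / (z - y)) (-1 / (z - y)) t := by
      have := ((hasDerivAt_id t).neg.add_const z).div_const (z - y)
      refine HasDerivAt.congr_of_eventuallyEq this (Eventually.of_forall fun s => ?_)
      simp only [id, Pi.neg_apply]
      ring
    have hψ : HasDerivAt (fun s : ℝ => Real.exp (-s) * ((z - s) / (z - y)))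
        (-Real.exp (-t) * ((z - t) / (z - y)) + Real.exp (-t) * (-1 / (z - y))) t := by
      have := hexp.mul hlin
      exact this
    have heq : tenthd x y z t
        = -Real.exp (-t) * ((z - t) / (z - y)) + Real.exp (-t) * (-1 / (z - y)) := by
      unfold tenthd
      have hnot : t ∉ Ioc x y := fun hc => absurd hc.2 (not_le.2 h2)
      rw [phi_eq_on_right hxy hyz h2.le h3.le,
        show phid x y z t = -(z - y)⁻¹ by unfold phid; rw [if_neg hnot, if_pos ⟨h2, h3.le⟩]]
      rw [inv_eq_one_div]
      ring
    rw [heq]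
    refine hψ.congr_of_eventuallyEq ?_
    filter_upwards [Ioo_mem_nhds h2 h3] with s hs
    simp [tenth, phi_eq_on_right hxy hyz hs.1.le hs.2.le]
  · exact absurd h3 htz
  · -- z < t
    have hz : tenthd x y z t = 0 := tenthd_eq_zero_right hxy hyz h3
    rw [hz]
    refine (hasDerivAt_const t (0:ℝ)).congr_of_eventuallyEq ?_
    filter_upwards [Ioi_mem_nhds h3] with s hs
    exact tenth_eq_zero_right hxy hyz (le_of_lt hs)

lemma tenth_ftc (a b : ℝ) :
    tenth x y z b - tenth x y z a = ∫ t in a..b, tenthd x y z t := by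
  have hcnt : ({x, y, z} : Set ℝ).Countable :=
    ((Set.finite_singleton z).insert y |>.insert x).countable
  have := MeasureTheory.integral_eq_of_hasDerivAt_off_countable
    (tenth x y z) (tenthd x y z) (a := a) (b := b) hcnt
    (tenth_cont).continuousOn
    (fun t htt => tenth_hasDeriv hxy hyz htt.2)
    (boundedII tenthd_meas (tenthd_abs_le hxy hyz) a b)
  linarith

lemma tenth_nonneg (t : ℝ) : 0 ≤ tenth x y z t :=
  mul_nonneg (Real.exp_pos _).le (phi_nonneg t)

lemma tenth_compact_support : HasCompactSupport (tenth x y z) := by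
  refine HasCompactSupport.intro (isCompact_Icc (a := x) (b := z)) (fun t ht => ?_)
  rw [mem_Icc] at ht
  rcases not_and_or.1 ht with h | h
  · exact tenth_eq_zero_left hxy hyz (le_of_lt (not_le.1 h))
  · exact tenth_eq_zero_right hxy hyz (le_of_lt (not_le.1 h))

lemma tenthd_memLp : MemLp (tenthd x y z) 2 volume := by
  set C0 : ℝ := Real.exp (-x) * ((y - x)⁻¹ + (z - y)⁻¹ + 1) with hC0
  refine MemLp.of_le (memLp_indicator_const 2 (measurableSet_Icc (a := x) (b := z)) C0 (Or.inr ?_))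
    tenthd_meas.aestronglyMeasurable (Eventually.of_forall fun t => ?_)
  · exact measure_Icc_lt_top.ne
  · by_cases hmem : t ∈ Icc x z
    · rw [indicator_of_mem hmem, Real.norm_eq_abs, Real.norm_eq_abs]
      exact (tenthd_abs_le hxy hyz t).trans (le_abs_self C0)
    · rcases not_and_or.1 hmem with h | h
      · rw [tenthd_eq_zero_left hxy hyz (le_of_lt (not_le.1 h))]
        simp
      · rw [tenthd_eq_zero_right hxy hyz (not_le.1 h)]
        simp


end St13
namespace St13
section Main

def wfun (D : PhaseD) : ℝ → ℝ := fun t => Real.exp (-t) * (D.u t + D.u' t)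

lemma u_cont (D : PhaseD) : Continuous D.u :=
  cont_of_ftc (fun a b => (D.locInt.integrableOn_isCompact isCompact_uIcc).intervalIntegrable)
    D.ftc

lemma wfun_locInt (D : PhaseD) : LocallyIntegrable (wfun D) volume := by
  have h1 : LocallyIntegrable (fun t => Real.exp (-t) * D.u t) volume :=
    ((Real.continuous_exp.comp continuous_neg).mul (u_cont D)).locallyIntegrable
  have h2 : LocallyIntegrable (fun t => Real.exp (-t) * D.u' t) volume := by
    rw [MeasureTheory.locallyIntegrable_iff]
    intro k hk
    have := (D.locInt.integrableOn_isCompact hk).mul_continuousOn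
      ((Real.continuous_exp.comp continuous_neg).continuousOn) hk
    simpa [mul_comm] using this
  have heq : wfun D = fun t => Real.exp (-t) * D.u t + Real.exp (-t) * D.u' t := by
    funext t; unfold wfun; ring
  rw [heq]; exact h1.add h2

def Wfun (D : PhaseD) : ℝ → ℝ := fun t => ∫ s in (0:ℝ)..t, wfun D s

lemma wfun_ii (D : PhaseD) (a b : ℝ) : IntervalIntegrable (wfun D) volume a b :=
  ((wfun_locInt D).integrableOn_isCompact isCompact_uIcc).intervalIntegrable

lemma Wfun_sub (D : PhaseD) (a b : ℝ) : Wfun D b - Wfun D a = ∫ s in a..b, wfun D s := by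
  have := intervalIntegral.integral_add_adjacent_intervals (wfun_ii D 0 a) (wfun_ii D a b)
  unfold Wfun
  linarith

lemma ephid_abs_le {x y z : ℝ} (hxy : x < y) (hyz : y < z) (t : ℝ) :
    |Real.exp (-t) * phid x y z t| ≤ Real.exp (-x) * ((y - x)⁻¹ + (z - y)⁻¹) := by
  have hC : (0:ℝ) ≤ (y - x)⁻¹ + (z - y)⁻¹ := by
    have h1 : (0:ℝ) ≤ (y - x)⁻¹ := inv_nonneg.2 (by linarith)
    have h2 : (0:ℝ) ≤ (z - y)⁻¹ := inv_nonneg.2 (by linarith)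
    linarith
  rcases le_total t x with ht | ht
  · rw [phid_eq_zero_left hxy hyz ht, mul_zero, abs_zero]
    positivity
  · rw [abs_mul, abs_of_pos (Real.exp_pos _)]
    have hexp : Real.exp (-t) ≤ Real.exp (-x) := Real.exp_le_exp.2 (by linarith)
    exact mul_le_mul hexp (phid_abs_le hxy hyz t) (abs_nonneg _) (Real.exp_pos _).le

lemma slope_ineq (D : PhaseD) (ν : Measure ℝ) (hν : PosMeasRepr D ν) {x y z : ℝ}
    (hxy : x < y) (hyz : y < z) :
    (Wfun D z - Wfun D y) / (z - y) ≤ (Wfun D y - Wfun D x) / (y - x) := by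
  have hxz : x < z := hxy.trans hyz
  set h : ℝ → ℝ := tenth x y z with hh
  set hd : ℝ → ℝ := tenthd x y z with hhd
  set e1 : ℝ → ℝ := fun t => Real.exp (-t) * phid x y z t with he1
  have fact1 : ∀ t, hd t = e1 t - h t := by
    intro t; simp only [hhd, he1, hh, tenthd, tenth]; ring
  have test : TestH1 h hd :=
    ⟨tenth_compact_support hxy hyz, tenthd_meas, fun a b => tenth_ftc hxy hyz a b,
      tenthd_memLp hxy hyz⟩
  have h0 : (0:ℝ) ≤ ∫ t, h t ∂ν := integral_nonneg fun t => tenth_nonneg hxy hyz t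
  have hrepr := hν h hd test
  -- restrict integrals to Ioc x z
  have hA : (∫ t, D.u t * h t) = ∫ t in Ioc x z, D.u t * h t := by
    symm
    apply setIntegral_eq_integral_of_forall_compl_eq_zero
    intro t ht
    rcases not_and_or.1 ht with hc | hc
    · rw [show h t = 0 from tenth_eq_zero_left hxy hyz (le_of_not_gt hc), mul_zero]
    · rw [show h t = 0 from tenth_eq_zero_right hxy hyz (le_of_lt (not_le.1 hc)), mul_zero]
  have hB : (∫ t, D.u' t * hd t) = ∫ t in Ioc x z, D.u' t * hd t := by
    symm
    apply setIntegral_eq_integral_of_forall_compl_eq_zero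
    intro t ht
    rcases not_and_or.1 ht with hc | hc
    · rw [show hd t = 0 from tenthd_eq_zero_left hxy hyz (le_of_not_gt hc), mul_zero]
    · rw [show hd t = 0 from tenthd_eq_zero_right hxy hyz (not_le.1 hc), mul_zero]
  -- integrability facts on Ioc x z
  have int_u_h : IntegrableOn (fun t => D.u t * h t) (Ioc x z) volume :=
    (((u_cont D).mul tenth_cont).integrableOn_Icc).mono_set Ioc_subset_Icc_self
  have int_u'_h : IntegrableOn (fun t => D.u' t * h t) (Ioc x z) volume :=
    ((D.locInt.integrableOn_isCompact isCompact_Icc).mul_continuousOn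
      tenth_cont.continuousOn isCompact_Icc).mono_set Ioc_subset_Icc_self
  have e1meas : Measurable e1 :=
    (Real.measurable_exp.comp measurable_neg).mul phid_meas
  have int_u'_e1 : IntegrableOn (fun t => D.u' t * e1 t) (Ioc x z) volume := by
    have h1 : IntegrableOn (fun t => e1 t * D.u' t) (Ioc x z) volume :=
      Integrable.bdd_mul (c := Real.exp (-x) * ((y - x)⁻¹ + (z - y)⁻¹))
        ((D.locInt.integrableOn_isCompact isCompact_Icc).mono_set
          Ioc_subset_Icc_self)
        e1meas.aestronglyMeasurable
        (Eventually.of_forall fun t => by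
          simpa [Real.norm_eq_abs, he1] using ephid_abs_le hxy hyz t)
    simpa [mul_comm] using h1
  have int_u_hd : IntegrableOn (fun t => D.u t * hd t) (Ioc x z) volume := by
    have h1 : IntegrableOn (fun t => hd t * D.u t) (Ioc x z) volume :=
      Integrable.bdd_mul (((u_cont D).integrableOn_Icc).mono_set Ioc_subset_Icc_self)
        tenthd_meas.aestronglyMeasurable
        (Eventually.of_forall fun t => by
          simpa [Real.norm_eq_abs] using tenthd_abs_le hxy hyz t)
    simpa [mul_comm] using h1
  -- integration by parts
  have hibp : ∫ t in Ioc x z, D.u' t * h t =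
      D.u z * h z - D.u x * h x - ∫ t in Ioc x z, D.u t * hd t :=
    ibp D.meas_u' D.locInt D.ftc tenthd_meas (tenthd_abs_le hxy hyz)
      (fun a b => tenth_ftc hxy hyz a b) hxz.le
  have hz0 : h z = 0 := tenth_eq_zero_right hxy hyz le_rfl
  have hx0 : h x = 0 := tenth_eq_zero_left hxy hyz le_rfl
  rw [hz0, hx0] at hibp
  norm_num at hibp
  -- split u' * hd
  have hsplit : ∫ t in Ioc x z, D.u' t * hd t =
      (∫ t in Ioc x z, D.u' t * e1 t) - ∫ t in Ioc x z, D.u' t * h t := by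
    rw [← MeasureTheory.integral_sub int_u'_e1 int_u'_h]
    refine setIntegral_congr_fun measurableSet_Ioc fun t _ => ?_
    rw [fact1]; ring
  -- combine u-terms
  have hcomb : (∫ t in Ioc x z, D.u t * h t) + (∫ t in Ioc x z, D.u t * hd t) =
      ∫ t in Ioc x z, D.u t * e1 t := by
    rw [← MeasureTheory.integral_add int_u_h int_u_hd]
    refine setIntegral_congr_fun measurableSet_Ioc fun t _ => ?_
    rw [fact1]; ring
  have int_u_e1 : IntegrableOn (fun t => D.u t * e1 t) (Ioc x z) volume := by
    have h2 := int_u_h.add int_u_hd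
    have heq : ((fun t => D.u t * h t) + fun t => D.u t * hd t) = fun t => D.u t * e1 t := by
      funext t
      simp only [Pi.add_apply]
      rw [fact1]; ring
    rwa [heq] at h2
  -- total
  have htot : (∫ t, D.u t * h t) + (∫ t, D.u' t * hd t) =
      ∫ t in Ioc x z, wfun D t * phid x y z t := by
    rw [hA, hB, hsplit, hibp]
    have : (∫ t in Ioc x z, D.u t * h t) + ((∫ t in Ioc x z, D.u' t * e1 t)
        - -(∫ t in Ioc x z, D.u t * hd t)) =
        ((∫ t in Ioc x z, D.u t * h t) + (∫ t in Ioc x z, D.u t * hd t))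
        + ∫ t in Ioc x z, D.u' t * e1 t := by ring
    rw [this, hcomb, ← MeasureTheory.integral_add int_u_e1 int_u'_e1]
    refine setIntegral_congr_fun measurableSet_Ioc fun t _ => ?_
    simp only [he1, wfun]; ring
  -- evaluate the phid integral
  have int_w_all : ∀ s : Set ℝ, MeasurableSet s → s ⊆ Icc x z →
      IntegrableOn (fun t => wfun D t * phid x y z t) s volume := by
    intro s hs hsub
    have h1 : IntegrableOn (fun t => phid x y z t * wfun D t) s volume :=
      Integrable.bdd_mul (((wfun_locInt D).integrableOn_isCompact isCompact_Icc).mono_set hsub)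
        phid_meas.aestronglyMeasurable
        (Eventually.of_forall fun t => by
          simpa [Real.norm_eq_abs] using phid_abs_le hxy hyz t)
    simpa [mul_comm] using h1
  have heval : ∫ t in Ioc x z, wfun D t * phid x y z t =
      (y - x)⁻¹ * (Wfun D y - Wfun D x) - (z - y)⁻¹ * (Wfun D z - Wfun D y) := by
    rw [← Ioc_union_Ioc_eq_Ioc hxy.le hyz.le,
      setIntegral_union (Ioc_disjoint_Ioc_of_le le_rfl) measurableSet_Ioc
        (int_w_all _ measurableSet_Ioc (Ioc_subset_Icc_self.trans (Icc_subset_Icc le_rfl hyz.le)))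
        (int_w_all _ measurableSet_Ioc (Ioc_subset_Icc_self.trans (Icc_subset_Icc hxy.le le_rfl)))]
    have e1' : ∫ t in Ioc x y, wfun D t * phid x y z t = (y - x)⁻¹ * (Wfun D y - Wfun D x) := by
      have : ∫ t in Ioc x y, wfun D t * phid x y z t = ∫ t in Ioc x y, wfun D t * (y - x)⁻¹ := by
        refine setIntegral_congr_fun measurableSet_Ioc fun t htt => ?_
        rw [show phid x y z t = (y - x)⁻¹ from if_pos htt]
      rw [this, integral_mul_const, ← intervalIntegral.integral_of_le hxy.le, ← Wfun_sub]
      ring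
    have e2' : ∫ t in Ioc y z, wfun D t * phid x y z t
        = -((z - y)⁻¹ * (Wfun D z - Wfun D y)) := by
      have : ∫ t in Ioc y z, wfun D t * phid x y z t
          = ∫ t in Ioc y z, wfun D t * -(z - y)⁻¹ := by
        refine setIntegral_congr_fun measurableSet_Ioc fun t htt => ?_
        have hnot : t ∉ Ioc x y := fun hc => absurd hc.2 (not_le.2 htt.1)
        rw [show phid x y z t = -(z - y)⁻¹ by unfold phid; rw [if_neg hnot, if_pos htt]]
      rw [this, integral_mul_const, ← intervalIntegral.integral_of_le hyz.le, ← Wfun_sub]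
      ring
    rw [e1', e2']
    ring
  have final : (0:ℝ) ≤ (y - x)⁻¹ * (Wfun D y - Wfun D x)
      - (z - y)⁻¹ * (Wfun D z - Wfun D y) := by
    rw [← heval, ← htot, ← hrepr]
    exact h0
  rw [div_eq_inv_mul, div_eq_inv_mul]
  linarith

end Main

section Gpart

variable (D : PhaseD) (ν : Measure ℝ)

/-- slope of `Wfun`. -/
def sl (a b : ℝ) : ℝ := (Wfun D b - Wfun D a) / (b - a)

variable {D ν}

lemma slope_mid (hν : PosMeasRepr D ν) {a b c : ℝ} (hab : a < b) (hbc : b < c) :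
    sl D b c ≤ sl D a c ∧ sl D a c ≤ sl D a b := by
  have h := slope_ineq D ν hν hab hbc
  unfold sl at *
  have h1 : 0 < b - a := by linarith
  have h2 : 0 < c - b := by linarith
  have h3 : 0 < c - a := by linarith
  rw [div_le_div_iff₀ h2 h1] at h
  constructor
  · rw [div_le_div_iff₀ h2 h3]; nlinarith
  · rw [div_le_div_iff₀ h3 h1]; nlinarith

/-- the monotone representative: sup of forward slopes. -/
def gfun (D : PhaseD) : ℝ → ℝ := fun a => sSup ((fun b => sl D a b) '' Ioi a)

lemma gfun_bddAbove (hν : PosMeasRepr D ν) (a : ℝ) :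
    BddAbove ((fun b => sl D a b) '' Ioi a) := by
  refine ⟨sl D (a - 1) a, ?_⟩
  rintro v ⟨b, hb, rfl⟩
  exact slope_ineq D ν hν (by linarith) hb

lemma gfun_nonempty (a : ℝ) : ((fun b => sl D a b) '' Ioi a).Nonempty :=
  ⟨sl D a (a + 1), ⟨a + 1, by simp, rfl⟩⟩

lemma gfun_antitone (hν : PosMeasRepr D ν) : Antitone (gfun D) := by
  intro a1 a2 h12
  rcases eq_or_lt_of_le h12 with rfl | h12
  · exact le_rfl
  have h1 : gfun D a2 ≤ sl D a1 a2 := by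
    refine csSup_le (gfun_nonempty a2) ?_
    rintro v ⟨b, hb, rfl⟩
    exact slope_ineq D ν hν h12 hb
  have h2 : sl D a1 a2 ≤ gfun D a1 :=
    le_csSup (gfun_bddAbove hν a1) ⟨a2, h12, rfl⟩
  exact h1.trans h2

lemma lebesgue_pts :
    ∀ᵐ a : ℝ ∂(volume : Measure ℝ), Tendsto (fun b => sl D a b) (𝓝[>] a) (𝓝 (wfun D a)) := by
  have hv := (IsUnifLocDoublingMeasure.vitaliFamily (volume : Measure ℝ) 1).ae_tendsto_average_norm_sub
    (wfun_locInt D)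
  filter_upwards [hv] with a ha
  have h2 : Tendsto (fun b => ⨍ s in Icc a b, ‖wfun D s - wfun D a‖) (𝓝[>] a) (𝓝 0) :=
    ha.comp (Real.tendsto_Icc_vitaliFamily_right a)
  rw [tendsto_iff_dist_tendsto_zero]
  refine squeeze_zero' (Eventually.of_forall fun b => dist_nonneg) ?_ h2
  filter_upwards [self_mem_nhdsWithin] with b hb
  rw [mem_Ioi] at hb
  have hba : 0 < b - a := by linarith
  have hWint : Wfun D b - Wfun D a = ∫ s in Icc a b, wfun D s := by
    rw [Wfun_sub, intervalIntegral.integral_of_le hb.le, ← integral_Icc_eq_integral_Ioc]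
  have hIcc : IntegrableOn (wfun D) (Icc a b) volume :=
    (wfun_locInt D).integrableOn_isCompact isCompact_Icc
  have hvol : (volume (Icc a b)).toReal = b - a := by
    rw [Real.volume_Icc, ENNReal.toReal_ofReal hba.le]
  have hconst : ∫ _ in Icc a b, wfun D a ∂(volume : Measure ℝ) = (b - a) * wfun D a := by
    rw [setIntegral_const, measureReal_def, hvol, smul_eq_mul]
  have hsub : ∫ s in Icc a b, (wfun D s - wfun D a) =
      (Wfun D b - Wfun D a) - (b - a) * wfun D a := by
    rw [MeasureTheory.integral_sub hIcc (integrableOn_const measure_Icc_lt_top.ne),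
      ← hWint, hconst]
  have hkey : sl D a b - wfun D a = (b - a)⁻¹ * ∫ s in Icc a b, (wfun D s - wfun D a) := by
    rw [hsub]
    unfold sl
    field_simp
  have havg : ⨍ s in Icc a b, ‖wfun D s - wfun D a‖
      = (b - a)⁻¹ * ∫ s in Icc a b, ‖wfun D s - wfun D a‖ := by
    rw [MeasureTheory.setAverage_eq, measureReal_def, hvol, smul_eq_mul]
  rw [Real.dist_eq, hkey, havg, abs_mul, abs_of_pos (inv_pos.2 hba)]
  refine mul_le_mul_of_nonneg_left ?_ (inv_pos.2 hba).le
  simpa [Real.norm_eq_abs] using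
    norm_integral_le_integral_norm (μ := volume.restrict (Icc a b)) (fun s => wfun D s - wfun D a)

lemma gfun_eq_ae (hν : PosMeasRepr D ν) :
    ∀ᵐ a : ℝ ∂(volume : Measure ℝ), gfun D a = wfun D a := by
  filter_upwards [lebesgue_pts (D := D)] with a ha
  have hge : wfun D a ≤ gfun D a := by
    refine le_of_tendsto ha ?_
    filter_upwards [self_mem_nhdsWithin] with b hb
    exact le_csSup (gfun_bddAbove hν a) ⟨b, hb, rfl⟩
  have hle : gfun D a ≤ wfun D a := by
    refine csSup_le (gfun_nonempty a) ?_
    rintro v ⟨b, hb, rfl⟩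
    rw [mem_Ioi] at hb
    refine ge_of_tendsto ha ?_
    filter_upwards [Ioo_mem_nhdsGT_of_mem ⟨le_rfl, hb⟩] with b' hb'
    exact (slope_mid hν hb'.1 hb'.2).2
  exact le_antisymm hle hge

end Gpart

section Final

lemma exp_sq_identity (D : PhaseD) (s : ℝ) :
    Real.exp (-s) * (D.u s + D.u' s) ^ 2 = Real.exp s * (wfun D s) ^ 2 := by
  unfold wfun
  rw [Real.exp_neg]
  have h := Real.exp_ne_zero s
  field_simp

lemma tail_contra {D : PhaseD} {x0 : ℝ}
    (hI : (∫⁻ s in Ioi x0, ENNReal.ofReal (Real.exp (-s) * (D.u s + D.u' s) ^ 2)) < ⊤)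
    {x1 : ℝ} (hx01 : x0 ≤ x1) {c : ℝ} (hc : 0 < c)
    (hb : ∀ᵐ s : ℝ ∂(volume : Measure ℝ), s ∈ Ioi x1 → c ≤ |wfun D s|) : False := by
  have h1 : (∫⁻ s in Ioi x1, ENNReal.ofReal (Real.exp x1 * c ^ 2) ∂(volume : Measure ℝ)) ≤
      ∫⁻ s in Ioi x1, ENNReal.ofReal (Real.exp (-s) * (D.u s + D.u' s) ^ 2) := by
    refine lintegral_mono_ae ?_
    filter_upwards [ae_restrict_of_ae hb, ae_restrict_mem measurableSet_Ioi] with s hs hmem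
    refine ENNReal.ofReal_le_ofReal ?_
    rw [exp_sq_identity]
    have hcw : c ≤ |wfun D s| := hs hmem
    have h2 : c ^ 2 ≤ (wfun D s) ^ 2 := by
      have := sq_abs (wfun D s)
      nlinarith
    have h3 : Real.exp x1 ≤ Real.exp s := Real.exp_le_exp.2 (le_of_lt hmem)
    nlinarith [Real.exp_pos s, Real.exp_pos x1, sq_nonneg c]
  have h4 : (∫⁻ s in Ioi x1, ENNReal.ofReal (Real.exp x1 * c ^ 2) ∂(volume : Measure ℝ)) = ⊤ := by
    rw [MeasureTheory.setLIntegral_const, Real.volume_Ioi, ENNReal.mul_top]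
    rw [Ne, ENNReal.ofReal_eq_zero, not_le]
    positivity
  have h5 : (∫⁻ s in Ioi x1, ENNReal.ofReal (Real.exp (-s) * (D.u s + D.u' s) ^ 2)) ≤
      ∫⁻ s in Ioi x0, ENNReal.ofReal (Real.exp (-s) * (D.u s + D.u' s) ^ 2) :=
    lintegral_mono_set (Ioi_subset_Ioi hx01)
  rw [h4] at h1
  exact absurd ((top_le_iff.1 (h1.trans h5))) hI.ne

end Final

end St13

/-- If `(u,μ) ∈ 𝒟` and `ω = u - u''` is a positive Borel measure,
then `x ↦ e^{-x}(u(x)+u'(x))` has a representative that is non-increasing,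
non-negative and tends to `0` at `+∞`. -/
theorem statement13 (D : PhaseD) (ν : Measure ℝ) (hν : PosMeasRepr D ν) :
    ∃ g : ℝ → ℝ,
      (∀ᵐ x : ℝ ∂volume, g x = Real.exp (-x) * (D.u x + D.u' x)) ∧
      Antitone g ∧ (∀ x : ℝ, 0 ≤ g x) ∧ Tendsto g atTop (nhds 0) := by
  classical
  -- extract a point with finite tail energy from `plusCond`
  have hev := eventually_lt_of_limsup_lt D.plusCond
  obtain ⟨x0, hx0⟩ := hev.exists
  have hI : (∫⁻ s in Ioi x0, ENNReal.ofReal (Real.exp (-s) * (D.u s + D.u' s) ^ 2)) < ⊤ := by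
    by_contra hcon
    rw [not_lt, top_le_iff] at hcon
    rw [hcon, top_add] at hx0
    rw [ENNReal.mul_top (by
      rw [Ne, ENNReal.ofReal_eq_zero, not_le]; exact Real.exp_pos x0)] at hx0
    exact absurd hx0 (lt_irrefl ⊤)
  have hanti : Antitone (St13.gfun D) := St13.gfun_antitone hν
  have hae : ∀ᵐ a : ℝ ∂(volume : Measure ℝ), St13.gfun D a = St13.wfun D a :=
    St13.gfun_eq_ae hν
  have hnonneg : ∀ a : ℝ, 0 ≤ St13.gfun D a := by
    intro a
    by_contra hneg
    rw [not_le] at hneg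
    have hgx1 : St13.gfun D (max a x0) ≤ St13.gfun D a := hanti (le_max_left a x0)
    refine St13.tail_contra hI (le_max_right a x0)
      (c := -(St13.gfun D (max a x0))) (by linarith) ?_
    filter_upwards [hae] with s hs
    intro hmem
    rw [← hs]
    have h1 : St13.gfun D s ≤ St13.gfun D (max a x0) := hanti (le_of_lt hmem)
    rw [abs_of_nonpos (by linarith)]
    linarith
  have hbdd : BddBelow (range (St13.gfun D)) := by
    refine ⟨0, ?_⟩
    rintro v ⟨s, rfl⟩
    exact hnonneg s
  have htend := tendsto_atTop_ciInf hanti hbdd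
  have hinf0 : (⨅ a : ℝ, St13.gfun D a) = 0 := by
    refine le_antisymm ?_ (le_ciInf hnonneg)
    by_contra hcon
    rw [not_le] at hcon
    refine St13.tail_contra hI (le_refl x0) (c := ⨅ a : ℝ, St13.gfun D a) hcon ?_
    filter_upwards [hae] with s hs
    intro _
    rw [← hs]
    exact (ciInf_le hbdd s).trans (le_abs_self _)
  rw [hinf0] at htend
  exact ⟨St13.gfun D, by filter_upwards [hae] with a ha using ha, hanti, hnonneg, htend⟩

end
end

section
/- The map (u, μ) ↦ u is a bijection between 𝒟⁺ and the set of all real-valued functions u ∈ H¹_loc(ℝ) such that the distribution u − u'' is a positive Borel measure on ℝ, the function u + u' belongs to L^∞(ℝ), and ∫_{−∞}^0 e^{−x}( u(x)² + u'(x)² ) dx < ∞. -/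
open MeasureTheory Filter Set
open scoped ENNReal

noncomputable section

/-- The conditions on a function `u` characterising the image of `𝒟⁺` under
`(u,μ) ↦ u`: `u ∈ H¹_loc(ℝ)` real-valued, `u - u''` is a positive Borel measure,
`u + u' ∈ L^∞(ℝ)`, and `∫_{-∞}^0 e^{-x}(u² + u'²) dx < ∞`. -/
def GoodPlusU (u : ℝ → ℝ) : Prop :=
  ∃ u' : ℝ → ℝ, ∃ ν : Measure ℝ,
    Measurable u' ∧
    (∀ a b : ℝ, u b - u a = ∫ x in a..b, u' x) ∧
    LocallyIntegrable u' volume ∧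
    LocallyIntegrable (fun x => (u' x) ^ 2) volume ∧
    (∀ h h' : ℝ → ℝ, TestH1 h h' →
      ∫ x, h x ∂ν = (∫ x, u x * h x) + ∫ x, u' x * h' x) ∧
    MemLp (fun x => u x + u' x) ⊤ volume ∧
    (∫⁻ x in Iio (0 : ℝ),
        ENNReal.ofReal (Real.exp (-x) * ((u x) ^ 2 + (u' x) ^ 2))) < ⊤



section AuxLemmas

lemma locInt_intervalIntegrable {f : ℝ → ℝ} (hf : LocallyIntegrable f volume) (a b : ℝ) :
    IntervalIntegrable f volume a b := by
  rw [intervalIntegrable_iff]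
  exact (hf.integrableOn_isCompact isCompact_uIcc).mono_set Set.uIoc_subset_uIcc

lemma cont_of_ftc {p p' : ℝ → ℝ} (hp : ∀ a b : ℝ, p b - p a = ∫ x in a..b, p' x)
    (hp' : LocallyIntegrable p' volume) : Continuous p := by
  have : p = fun x => p 0 + ∫ t in (0:ℝ)..x, p' t := by
    funext x; have := hp 0 x; linarith
  rw [this]
  exact continuous_const.add (intervalIntegral.continuous_primitive
    (fun a b => locInt_intervalIntegrable hp' a b) 0)

/-- Product rule / integration by parts for two H¹loc pairs, proved via Fubini. -/
lemma ftc_mul {p p' q q' : ℝ → ℝ}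
    (hp : ∀ a b : ℝ, p b - p a = ∫ x in a..b, p' x)
    (hq : ∀ a b : ℝ, q b - q a = ∫ x in a..b, q' x)
    (hp' : LocallyIntegrable p' volume) (hq' : LocallyIntegrable q' volume)
    (hmp : Measurable p') (hmq : Measurable q')
    {a b : ℝ} (hab : a ≤ b) :
    p b * q b - p a * q a = ∫ x in a..b, (p' x * q x + p x * q' x) := by
  have hpc : Continuous p := cont_of_ftc hp hp'
  have hqc : Continuous q := cont_of_ftc hq hq'
  set S : Set ℝ := Ioc a b with hS
  have hSm : MeasurableSet S := measurableSet_Ioc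
  have hSsub : S ⊆ Icc a b := Ioc_subset_Icc_self
  have hp'S : IntegrableOn p' S volume :=
    (hp'.integrableOn_isCompact isCompact_Icc).mono_set hSsub
  have hq'S : IntegrableOn q' S volume :=
    (hq'.integrableOn_isCompact isCompact_Icc).mono_set hSsub
  -- integrability of products
  have hp'q : IntegrableOn (fun t => p' t * q t) S volume :=
    ((hp'.integrableOn_isCompact isCompact_Icc).mul_continuousOn
      hqc.continuousOn isCompact_Icc).mono_set hSsub
  have hq'p : IntegrableOn (fun t => q' t * p t) S volume :=
    ((hq'.integrableOn_isCompact isCompact_Icc).mul_continuousOn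
      hpc.continuousOn isCompact_Icc).mono_set hSsub
  -- Fubini step
  have key : ∫ t in S, p' t * (q t - q a) = ∫ s in S, q' s * (p b - p s) := by
    have hswap :
        ∫ t in S, (∫ s in S, (if s ≤ t then p' t * q' s else 0))
          = ∫ s in S, (∫ t in S, (if s ≤ t then p' t * q' s else 0)) := by
      apply MeasureTheory.integral_integral_swap
      have hint : Integrable (fun z : ℝ × ℝ => |p' z.1| * |q' z.2|)
          ((volume.restrict S).prod (volume.restrict S)) :=
        Integrable.mul_prod hp'S.norm hq'S.norm
      apply hint.mono'
      · have hmeas : Measurable (fun z : ℝ × ℝ => if z.2 ≤ z.1 then p' z.1 * q' z.2 else 0) :=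
          Measurable.ite (measurableSet_le measurable_snd measurable_fst)
            ((hmp.comp measurable_fst).mul (hmq.comp measurable_snd)) measurable_const
        exact hmeas.aestronglyMeasurable
      · refine Eventually.of_forall (fun z => ?_)
        by_cases hz : z.2 ≤ z.1
        · simp only [Function.uncurry, hz, if_true, Real.norm_eq_abs, abs_mul]; exact le_rfl
        · simp only [Function.uncurry, hz, if_false, norm_zero]
          positivity
    have h1 : ∀ t ∈ S, (∫ s in S, (if s ≤ t then p' t * q' s else 0)) = p' t * (q t - q a) := by
      intro t ht
      have : (∫ s in S, (if s ≤ t then p' t * q' s else 0))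
          = p' t * ∫ s in S, (if s ≤ t then q' s else 0) := by
        rw [← integral_const_mul]
        congr 1; funext s; by_cases hs : s ≤ t <;> simp [hs]
      rw [this]
      congr 1
      have : (fun s => if s ≤ t then q' s else 0) = (Iic t).indicator q' := by
        funext s; by_cases hs : s ≤ t <;> simp [Set.indicator, hs]
      rw [this, integral_indicator measurableSet_Iic,
        Measure.restrict_restrict measurableSet_Iic]
      have hset : Iic t ∩ S = Ioc a t := by
        ext s; simp only [mem_inter_iff, mem_Iic, hS, mem_Ioc]
        exact ⟨fun ⟨h1, h2, h3⟩ => ⟨h2, h1⟩, fun ⟨h1, h2⟩ => ⟨h2, h1, le_trans h2 ht.2⟩⟩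
      rw [hset]
      have := hq a t
      rw [intervalIntegral.integral_of_le ht.1.le] at this
      linarith
    have h2 : ∀ s ∈ S, (∫ t in S, (if s ≤ t then p' t * q' s else 0)) = q' s * (p b - p s) := by
      intro s hs
      have : (∫ t in S, (if s ≤ t then p' t * q' s else 0))
          = (∫ t in S, (if s ≤ t then p' t else 0)) * q' s := by
        rw [← integral_mul_const]
        congr 1; funext t; by_cases ht : s ≤ t <;> simp [ht]
      rw [this, mul_comm]
      congr 1
      have : (fun t => if s ≤ t then p' t else 0) = (Ici s).indicator p' := by
        funext t; by_cases ht : s ≤ t <;> simp [Set.indicator, ht]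
      rw [this, integral_indicator measurableSet_Ici,
        Measure.restrict_restrict measurableSet_Ici]
      have hset : Ici s ∩ S = Icc s b := by
        ext t; simp only [mem_inter_iff, mem_Ici, hS, mem_Ioc, mem_Icc]
        exact ⟨fun ⟨h1, h2, h3⟩ => ⟨h1, h3⟩, fun ⟨h1, h2⟩ => ⟨h1, lt_of_lt_of_le hs.1 h1, h2⟩⟩
      rw [hset, integral_Icc_eq_integral_Ioc]
      have := hp s b
      rw [intervalIntegral.integral_of_le hs.2] at this
      linarith
    calc ∫ t in S, p' t * (q t - q a)
        = ∫ t in S, (∫ s in S, (if s ≤ t then p' t * q' s else 0)) :=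
          (setIntegral_congr_fun hSm (fun t ht => (h1 t ht).symm))
      _ = ∫ s in S, (∫ t in S, (if s ≤ t then p' t * q' s else 0)) := hswap
      _ = ∫ s in S, q' s * (p b - p s) := setIntegral_congr_fun hSm h2
  -- now assemble
  have e1 : ∫ t in S, p' t * q t = q a * (p b - p a) + ∫ s in S, q' s * (p b - p s) := by
    have hsplit : ∀ t, p' t * q t = p' t * q a + p' t * (q t - q a) := by intro t; ring
    have hint2 : IntegrableOn (fun t => p' t * (q t - q a)) S volume := by
      have : (fun t => p' t * (q t - q a)) = fun t => p' t * q t - p' t * q a := by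
        funext t; ring
      rw [this]; exact hp'q.sub (hp'S.mul_const _)
    calc ∫ t in S, p' t * q t = ∫ t in S, (p' t * q a + p' t * (q t - q a)) := by
          simp_rw [← hsplit]
      _ = (∫ t in S, p' t * q a) + ∫ t in S, p' t * (q t - q a) :=
          integral_add (hp'S.mul_const _) hint2
      _ = q a * (p b - p a) + ∫ s in S, q' s * (p b - p s) := by
          rw [key]; congr 1
          rw [integral_mul_const]
          have := hp a b
          rw [intervalIntegral.integral_of_le hab] at this
          rw [← this]; ring
  have e2 : ∫ s in S, q' s * (p b - p s) = p b * (q b - q a) - ∫ s in S, q' s * p s := by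
    have hint2 : IntegrableOn (fun s => q' s * p b) S volume := hq'S.mul_const _
    have : (fun s => q' s * (p b - p s)) = fun s => q' s * p b - q' s * p s := by
      funext s; ring
    rw [this, integral_sub hint2 hq'p, integral_mul_const]
    have := hq a b
    rw [intervalIntegral.integral_of_le hab] at this
    rw [← this]; ring
  have e3 : ∫ t in S, (p' t * q t + p t * q' t)
      = (∫ t in S, p' t * q t) + ∫ t in S, q' t * p t := by
    rw [← integral_add hp'q hq'p]
    congr 1; funext t; ring
  rw [intervalIntegral.integral_of_le hab]
  rw [e3, e1, e2]; ring


lemma integrable_of_zero_off {f : ℝ → ℝ} {a b : ℝ} (hf : IntegrableOn f (Icc a b) volume)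
    (h0 : ∀ t, t ∉ Icc a b → f t = 0) : Integrable f volume := by
  have hfe : f = (Icc a b).indicator f := by
    funext t; by_cases ht : t ∈ Icc a b <;> simp [Set.indicator, ht, h0]
  rw [hfe]; exact (integrable_indicator_iff measurableSet_Icc).2 hf

lemma ibp_global {u u' h h' : ℝ → ℝ}
    (hu : ∀ a b : ℝ, u b - u a = ∫ x in a..b, u' x)
    (hh : ∀ a b : ℝ, h b - h a = ∫ x in a..b, h' x)
    (hu' : LocallyIntegrable u' volume) (hh' : LocallyIntegrable h' volume)
    (hmu : Measurable u') (hmh : Measurable h')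
    {a A : ℝ} (hsupp : ∀ t, t ∉ Icc a A → h t = 0 ∧ h' t = 0) :
    (∫ t, u t * h' t) + (∫ t, u' t * h t) = 0 := by
  have huc : Continuous u := cont_of_ftc hu hu'
  have hhc : Continuous h := cont_of_ftc hh hh'
  set c : ℝ := min a A - 1 with hc
  set d : ℝ := max a A + 1 with hd
  have hcd : c ≤ d := by
    have h1 : min a A ≤ max a A := le_trans (min_le_left _ _) (le_max_left _ _)
    simp only [hc, hd]; linarith
  have hcompl : ∀ t, t ∉ Ioc c d → t ∉ Icc a A := by
    intro t ht hmem
    apply ht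
    constructor
    · have := hmem.1; have : min a A ≤ t := le_trans (min_le_left _ _) this; simp only [hc]; linarith
    · have := hmem.2; have : t ≤ max a A := le_trans this (le_max_right _ _); simp only [hd]; linarith
  have h1 : (∫ t, u t * h' t) = ∫ t in Ioc c d, u t * h' t := by
    refine (setIntegral_eq_integral_of_forall_compl_eq_zero (fun t ht => ?_)).symm
    rw [(hsupp t (hcompl t ht)).2, mul_zero]
  have h2 : (∫ t, u' t * h t) = ∫ t in Ioc c d, u' t * h t := by
    refine (setIntegral_eq_integral_of_forall_compl_eq_zero (fun t ht => ?_)).symm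
    rw [(hsupp t (hcompl t ht)).1, mul_zero]
  have hint1 : IntegrableOn (fun t => u t * h' t) (Ioc c d) volume :=
    (IntegrableOn.continuousOn_mul huc.continuousOn
      (hh'.integrableOn_isCompact isCompact_Icc) isCompact_Icc).mono_set Ioc_subset_Icc_self
  have hint2 : IntegrableOn (fun t => u' t * h t) (Ioc c d) volume :=
    (IntegrableOn.mul_continuousOn (hu'.integrableOn_isCompact isCompact_Icc)
      hhc.continuousOn isCompact_Icc).mono_set Ioc_subset_Icc_self
  have hmul := ftc_mul hu hh hu' hh' hmu hmh hcd
  rw [intervalIntegral.integral_of_le hcd] at hmul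
  have hbd : u d * h d - u c * h c = 0 := by
    have hcnot : c ∉ Icc a A := by
      intro hmem; have := hmem.1
      have h2 : min a A ≤ c := le_trans (min_le_left _ _) this
      simp only [hc] at h2; linarith
    have hdnot : d ∉ Icc a A := by
      intro hmem; have := hmem.2
      have h2 : d ≤ max a A := le_trans this (le_max_right _ _)
      simp only [hd] at h2; linarith
    rw [(hsupp c hcnot).1, (hsupp d hdnot).1, mul_zero, mul_zero, sub_zero]
  rw [h1, h2, ← integral_add hint1 hint2]
  rw [← hbd, hmul]
  congr 1; funext t; ring

lemma clamp_ftc {p δ : ℝ} (hδ : 0 < δ) {a b : ℝ} (hab : a ≤ b) :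
    min (max (b - p) 0) δ - min (max (a - p) 0) δ
      = ∫ s in a..b, (Ioc p (p+δ)).indicator (fun _ => (1:ℝ)) s := by
  rw [intervalIntegral.integral_of_le hab, integral_indicator measurableSet_Ioc,
    Measure.restrict_restrict measurableSet_Ioc, Set.Ioc_inter_Ioc, setIntegral_const,
    smul_eq_mul, mul_one, measureReal_def, Real.volume_Ioc]
  rcases le_total ((p+δ) ⊓ b - p ⊔ a) 0 with hle | hle
  · rw [ENNReal.ofReal_of_nonpos hle]
    simp only [ENNReal.toReal_zero]
    simp only [min_def, max_def] at hle ⊢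
    split_ifs at hle ⊢ <;> linarith
  · rw [ENNReal.toReal_ofReal hle]
    simp only [min_def, max_def] at hle ⊢
    split_ifs at hle ⊢ <;> linarith


lemma tendsto_addwin (x : ℝ) : Tendsto (fun δ : ℝ => x + δ) (nhdsWithin 0 (Ioi 0)) (nhdsWithin x (Ioi x)) := by
  apply tendsto_nhdsWithin_of_tendsto_nhds_of_eventually_within
  · have : Tendsto (fun δ : ℝ => x + δ) (nhds 0) (nhds (x + 0)) :=
      (continuous_const.add continuous_id).tendsto 0
    simpa using this.mono_left nhdsWithin_le_nhds
  · filter_upwards [self_mem_nhdsWithin] with δ (hδ : δ ∈ Ioi 0)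
    exact (lt_add_iff_pos_right x).2 hδ

lemma ae_tendsto_avg_Icc {f : ℝ → ℝ} (hf : LocallyIntegrable f volume) :
    ∀ᵐ x ∂(volume : Measure ℝ),
      Tendsto (fun δ : ℝ => ⨍ t in Icc x (x+δ), f t) (nhdsWithin 0 (Ioi 0)) (nhds (f x)) := by
  filter_upwards [(IsUnifLocDoublingMeasure.vitaliFamily (volume : Measure ℝ) 1).ae_tendsto_average hf]
    with x hx
  exact hx.comp ((Real.tendsto_Icc_vitaliFamily_right x).comp (tendsto_addwin x))

lemma avg_Icc_eq {f : ℝ → ℝ} (x δ : ℝ) (hδ : 0 < δ) :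
    ⨍ t in Icc x (x+δ), f t = δ⁻¹ * ∫ t in Ioc x (x+δ), f t := by
  rw [setAverage_eq, integral_Icc_eq_integral_Ioc, measureReal_def, Real.volume_Icc, smul_eq_mul]
  congr 2
  rw [show x + δ - x = δ by ring, ENNReal.toReal_ofReal hδ.le]

/-- If the averages of `f` over right intervals are antitone in the left endpoint,
then `f` has an antitone representative. -/
lemma exists_antitone_rep {f : ℝ → ℝ} (hf : LocallyIntegrable f volume)
    (hmono : ∀ x y : ℝ, x ≤ y → ∀ δ : ℝ, 0 < δ →
      ∫ t in Ioc y (y+δ), f t ≤ ∫ t in Ioc x (x+δ), f t) :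
    ∃ g : ℝ → ℝ, Antitone g ∧ f =ᵐ[volume] g := by
  set E : Set ℝ := {x | Tendsto (fun δ : ℝ => ⨍ t in Icc x (x+δ), f t)
    (nhdsWithin 0 (Ioi 0)) (nhds (f x))} with hE
  have hEae : ∀ᵐ x ∂(volume : Measure ℝ), x ∈ E := ae_tendsto_avg_Icc hf
  have hEc : volume Eᶜ = 0 := by rwa [ae_iff] at hEae
  have hEleft : ∀ r : ℝ, ∃ e ∈ E, e ≤ r := by
    intro r
    by_contra hcon
    push_neg at hcon
    have hsub : Iio r ⊆ Eᶜ := by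
      intro z hz hzE
      exact absurd (hcon z hzE) (not_lt.2 (le_of_lt hz)).elim
    have := measure_mono (μ := (volume : Measure ℝ)) hsub
    rw [hEc, Real.volume_Iio] at this
    simp at this
  have hEright : ∀ r : ℝ, ∃ e ∈ E, r ≤ e := by
    intro r
    by_contra hcon
    push_neg at hcon
    have hsub : Ioi r ⊆ Eᶜ := by
      intro z hz hzE
      exact absurd (hcon z hzE) (not_lt.2 (le_of_lt hz)).elim
    have := measure_mono (μ := (volume : Measure ℝ)) hsub
    rw [hEc, Real.volume_Ioi] at this
    simp at this
  have hanti : ∀ a ∈ E, ∀ b ∈ E, a ≤ b → f b ≤ f a := by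
    intro a ha b hb hab
    refine le_of_tendsto_of_tendsto hb ha ?_
    filter_upwards [self_mem_nhdsWithin] with δ (hδ : δ ∈ Ioi 0)
    rw [avg_Icc_eq _ _ hδ, avg_Icc_eq _ _ hδ]
    exact mul_le_mul_of_nonneg_left (hmono a b hab δ hδ) (inv_nonneg.2 hδ.le)
  set g : ℝ → ℝ := fun t => sInf (f '' (E ∩ Iic t)) with hg
  have hne : ∀ t, (f '' (E ∩ Iic t)).Nonempty := by
    intro t
    obtain ⟨e, he, het⟩ := hEleft t
    exact ⟨f e, e, ⟨he, het⟩, rfl⟩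
  have hbdd : ∀ t, BddBelow (f '' (E ∩ Iic t)) := by
    intro t
    obtain ⟨e, he, het⟩ := hEright t
    refine ⟨f e, fun z hz => ?_⟩
    obtain ⟨w, ⟨hwE, hwt⟩, rfl⟩ := hz
    exact hanti w hwE e he (le_trans hwt het)
  have hganti : Antitone g := by
    intro s t hst
    apply csInf_le_csInf (hbdd t) (hne s)
    exact image_mono (inter_subset_inter_right E (Iic_subset_Iic.2 hst))
  have hgf : ∀ a ∈ E, g a = f a := by
    intro a ha
    apply le_antisymm
    · exact csInf_le (hbdd a) ⟨a, ⟨ha, le_refl a⟩, rfl⟩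
    · apply le_csInf (hne a)
      rintro z ⟨w, ⟨hwE, hwa⟩, rfl⟩
      exact hanti w hwE a ha hwa
  refine ⟨g, hganti, ?_⟩
  filter_upwards [hEae] with a ha
  exact (hgf a ha).symm

/-- a.e. uniqueness of the `H¹loc` derivative. -/
lemma deriv_ae_unique {u u₁' u₂' : ℝ → ℝ}
    (h1 : ∀ a b : ℝ, u b - u a = ∫ t in a..b, u₁' t)
    (h2 : ∀ a b : ℝ, u b - u a = ∫ t in a..b, u₂' t)
    (l1 : LocallyIntegrable u₁' volume) (l2 : LocallyIntegrable u₂' volume) :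
    u₁' =ᵐ[volume] u₂' := by
  filter_upwards [ae_tendsto_avg_Icc l1, ae_tendsto_avg_Icc l2] with x hx1 hx2
  have heq : ∀ᶠ δ : ℝ in nhdsWithin 0 (Ioi 0),
      (fun δ : ℝ => ⨍ t in Icc x (x+δ), u₁' t) δ = (fun δ : ℝ => ⨍ t in Icc x (x+δ), u₂' t) δ := by
    filter_upwards [self_mem_nhdsWithin] with δ (hδ : δ ∈ Ioi 0)
    have e1 := h1 x (x+δ); have e2 := h2 x (x+δ)
    rw [intervalIntegral.integral_of_le (by linarith [mem_Ioi.1 hδ])] at e1 e2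
    rw [avg_Icc_eq _ _ hδ, avg_Icc_eq _ _ hδ, ← e1, ← e2]
  exact tendsto_nhds_unique (hx1.congr' heq) hx2


lemma bounded_of_antitone {g : ℝ → ℝ} (hg : Antitone g)
    (hminus : (∫⁻ s in Iio (0:ℝ), ENNReal.ofReal (Real.exp s * (g s)^2)) < ⊤)
    (hplus : Filter.limsup (fun x : ℝ => ENNReal.ofReal (Real.exp x) *
        ∫⁻ s in Ioi x, ENNReal.ofReal (Real.exp s * (g s)^2)) Filter.atTop < ⊤) :
    ∃ C : ℝ, ∀ t : ℝ, |Real.exp t * g t| ≤ C := by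
  have hgm : Measurable g := hg.measurable
  have hFm : Measurable (fun s : ℝ => ENNReal.ofReal (Real.exp s * (g s)^2)) :=
    ENNReal.measurable_ofReal.comp (Real.measurable_exp.mul (hgm.pow_const 2))
  obtain ⟨b', hb1, hb2⟩ := exists_between hplus
  have hev := Filter.eventually_lt_of_limsup_lt hb1
  obtain ⟨X, hX⟩ := Filter.eventually_atTop.1 hev
  set X₀ : ℝ := max X 0 with hX₀
  -- nonnegativity of g
  have hnn : ∀ t, 0 ≤ g t := by
    intro t
    by_contra hneg
    push_neg at hneg
    set x : ℝ := max t X₀ with hx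
    have hxe : ENNReal.ofReal (Real.exp x) *
        (∫⁻ s in Ioi x, ENNReal.ofReal (Real.exp s * (g s)^2)) < b' :=
      hX x (le_trans (le_max_left _ _) (le_max_right t X₀))
    have hlow : ∀ s ∈ Ioi x, ENNReal.ofReal (Real.exp x * (g t)^2)
        ≤ ENNReal.ofReal (Real.exp s * (g s)^2) := by
      intro s hs
      rw [mem_Ioi] at hs
      have h1 : g s ≤ g t := hg (le_trans (le_max_left t X₀) hs.le)
      have h2 : (g t)^2 ≤ (g s)^2 := by nlinarith
      have h3 : Real.exp x ≤ Real.exp s := Real.exp_le_exp.2 hs.le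
      apply ENNReal.ofReal_le_ofReal
      nlinarith [Real.exp_pos x, Real.exp_pos s]
    have htop : (∫⁻ s in Ioi x, ENNReal.ofReal (Real.exp s * (g s)^2)) = ⊤ := by
      rw [eq_top_iff]
      calc (⊤ : ℝ≥0∞) = ENNReal.ofReal (Real.exp x * (g t)^2) * volume (Ioi x) := by
            rw [Real.volume_Ioi, ENNReal.mul_top]
            have hq : 0 < (g t)^2 := by nlinarith
            exact (ENNReal.ofReal_pos.2 (by nlinarith [Real.exp_pos x])).ne'
        _ = ∫⁻ _ in Ioi x, ENNReal.ofReal (Real.exp x * (g t)^2) := by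
            rw [setLIntegral_const]
        _ ≤ _ := setLIntegral_mono hFm hlow
    rw [htop, ENNReal.mul_top (ENNReal.ofReal_pos.2 (Real.exp_pos x)).ne'] at hxe
    exact not_top_lt hxe
  -- right bound
  have hright : ∀ t, X₀ + 1 ≤ t → (Real.exp t * g t)^2 ≤ Real.exp 2 * b'.toReal := by
    intro t ht
    set x : ℝ := t - 1 with hxdef
    have hxX : X ≤ x := by
      have : X ≤ X₀ := le_max_left _ _
      simp only [hxdef]; linarith
    have hxe := hX x hxX
    have hlow : ∀ s ∈ Ioc x t, ENNReal.ofReal (Real.exp x * (g t)^2)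
        ≤ ENNReal.ofReal (Real.exp s * (g s)^2) := by
      intro s hs
      have h1 : g t ≤ g s := hg hs.2
      have h2 : (g t)^2 ≤ (g s)^2 := by nlinarith [hnn t, hnn s]
      have h3 : Real.exp x ≤ Real.exp s := Real.exp_le_exp.2 hs.1.le
      apply ENNReal.ofReal_le_ofReal
      nlinarith [Real.exp_pos x, Real.exp_pos s, hnn t]
    have hchain : ENNReal.ofReal (Real.exp x) * ENNReal.ofReal (Real.exp x * (g t)^2) ≤ b' := by
      calc ENNReal.ofReal (Real.exp x) * ENNReal.ofReal (Real.exp x * (g t)^2)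
          = ENNReal.ofReal (Real.exp x) *
              (ENNReal.ofReal (Real.exp x * (g t)^2) * volume (Ioc x t)) := by
            rw [Real.volume_Ioc, show t - x = 1 by simp [hxdef], ENNReal.ofReal_one, mul_one]
        _ = ENNReal.ofReal (Real.exp x) *
              ∫⁻ _ in Ioc x t, ENNReal.ofReal (Real.exp x * (g t)^2) := by
            rw [setLIntegral_const]
        _ ≤ ENNReal.ofReal (Real.exp x) *
              ∫⁻ s in Ioc x t, ENNReal.ofReal (Real.exp s * (g s)^2) :=
            mul_le_mul_right (setLIntegral_mono hFm hlow) _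
        _ ≤ ENNReal.ofReal (Real.exp x) *
              ∫⁻ s in Ioi x, ENNReal.ofReal (Real.exp s * (g s)^2) :=
            mul_le_mul_right (lintegral_mono_set Ioc_subset_Ioi_self) _
        _ ≤ b' := hxe.le
    rw [← ENNReal.ofReal_mul (Real.exp_pos x).le] at hchain
    have hreal : Real.exp x * (Real.exp x * (g t)^2) ≤ b'.toReal := by
      rcases le_total (Real.exp x * (Real.exp x * (g t)^2)) 0 with hc | hc
      · exact le_trans hc ENNReal.toReal_nonneg
      · exact (ENNReal.ofReal_le_iff_le_toReal hb2.ne).1 hchain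
    have hexpt : Real.exp t = Real.exp x * Real.exp 1 := by
      rw [← Real.exp_add]; congr 1; simp [hxdef]
    have h2 : Real.exp 2 = Real.exp 1 * Real.exp 1 := by
      rw [← Real.exp_add]; norm_num
    calc (Real.exp t * g t)^2 = (Real.exp 1)^2 * (Real.exp x * (Real.exp x * (g t)^2)) := by
          rw [hexpt]; ring
      _ ≤ (Real.exp 1)^2 * b'.toReal := by
          apply mul_le_mul_of_nonneg_left hreal (by positivity)
      _ = Real.exp 2 * b'.toReal := by rw [h2]; ring
  -- left bound
  set M : ℝ≥0∞ := ∫⁻ s in Iio (0:ℝ), ENNReal.ofReal (Real.exp s * (g s)^2) with hMdef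
  have hleft : ∀ t, t ≤ 0 → (Real.exp t * g t)^2 ≤ Real.exp 1 * M.toReal := by
    intro t ht
    have hlow : ∀ s ∈ Ioo (t-1) t, ENNReal.ofReal (Real.exp (t-1) * (g t)^2)
        ≤ ENNReal.ofReal (Real.exp s * (g s)^2) := by
      intro s hs
      have h1 : g t ≤ g s := hg hs.2.le
      have h2 : (g t)^2 ≤ (g s)^2 := by nlinarith [hnn t, hnn s]
      have h3 : Real.exp (t-1) ≤ Real.exp s := Real.exp_le_exp.2 hs.1.le
      apply ENNReal.ofReal_le_ofReal
      nlinarith [Real.exp_pos (t-1), Real.exp_pos s, hnn t]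
    have hchain : ENNReal.ofReal (Real.exp (t-1) * (g t)^2) ≤ M := by
      calc ENNReal.ofReal (Real.exp (t-1) * (g t)^2)
          = ENNReal.ofReal (Real.exp (t-1) * (g t)^2) * volume (Ioo (t-1) t) := by
            rw [Real.volume_Ioo, show t - (t-1) = 1 by ring, ENNReal.ofReal_one, mul_one]
        _ = ∫⁻ _ in Ioo (t-1) t, ENNReal.ofReal (Real.exp (t-1) * (g t)^2) := by
            rw [setLIntegral_const]
        _ ≤ ∫⁻ s in Ioo (t-1) t, ENNReal.ofReal (Real.exp s * (g s)^2) :=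
            setLIntegral_mono hFm hlow
        _ ≤ M := by
            rw [hMdef]
            apply lintegral_mono_set
            intro s hs
            rw [mem_Iio]
            exact lt_of_lt_of_le hs.2 ht
    have hreal : Real.exp (t-1) * (g t)^2 ≤ M.toReal := by
      rcases le_total (Real.exp (t-1) * (g t)^2) 0 with hc | hc
      · exact le_trans hc ENNReal.toReal_nonneg
      · exact (ENNReal.ofReal_le_iff_le_toReal hminus.ne).1 hchain
    have he1 : Real.exp t * Real.exp t = Real.exp (t+1) * Real.exp (t-1) := by
      rw [← Real.exp_add, ← Real.exp_add]; ring_nf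
    have he2 : Real.exp (t+1) ≤ Real.exp 1 := Real.exp_le_exp.2 (by linarith)
    calc (Real.exp t * g t)^2 = Real.exp (t+1) * (Real.exp (t-1) * (g t)^2) := by
          rw [pow_two]; nlinarith [he1]
      _ ≤ Real.exp 1 * M.toReal := by
          apply mul_le_mul he2 hreal (by positivity) (Real.exp_pos 1).le
  -- middle bound and conclusion
  set C₁ : ℝ := Real.sqrt (Real.exp 2 * b'.toReal) with hC₁
  set C₂ : ℝ := Real.sqrt (Real.exp 1 * M.toReal) with hC₂
  set C₃ : ℝ := Real.exp (X₀ + 1) * g 0 with hC₃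
  refine ⟨max C₁ (max C₂ C₃), fun t => ?_⟩
  rcases le_total t 0 with ht | ht
  · have := hleft t ht
    have habs : |Real.exp t * g t| = Real.sqrt ((Real.exp t * g t)^2) := by
      rw [Real.sqrt_sq_eq_abs]
    rw [habs]
    refine le_trans (Real.sqrt_le_sqrt this) ?_
    exact le_trans (le_refl C₂) (le_trans (le_max_left _ _) (le_max_right _ _))
  · rcases le_total t (X₀ + 1) with ht2 | ht2
    · have h1 : Real.exp t * g t ≤ Real.exp (X₀ + 1) * g 0 := by
        have hgt : g t ≤ g 0 := hg ht
        have : Real.exp t ≤ Real.exp (X₀ + 1) := Real.exp_le_exp.2 ht2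
        nlinarith [hnn t, hnn 0, Real.exp_pos t, Real.exp_pos (X₀+1)]
      have h0 : 0 ≤ Real.exp t * g t := mul_nonneg (Real.exp_pos t).le (hnn t)
      rw [abs_of_nonneg h0]
      exact le_trans h1 (le_trans (le_max_right C₂ C₃) (le_max_right _ _))
    · have := hright t ht2
      have habs : |Real.exp t * g t| = Real.sqrt ((Real.exp t * g t)^2) := by
        rw [Real.sqrt_sq_eq_abs]
      rw [habs]
      exact le_trans (Real.sqrt_le_sqrt this) (le_max_left _ _)


lemma mono_avg {u u' : ℝ → ℝ}
    (hu : ∀ a b : ℝ, u b - u a = ∫ t in a..b, u' t)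
    (hu'loc : LocallyIntegrable u' volume) (hmu : Measurable u')
    (hpos : ∀ h h' : ℝ → ℝ, TestH1 h h' → (∀ t, 0 ≤ h t) →
       0 ≤ (∫ t, u t * h t) + ∫ t, u' t * h' t)
    {x y : ℝ} (hxy : x ≤ y) {δ : ℝ} (hδ : 0 < δ) :
    ∫ t in Ioc y (y+δ), (Real.exp (-t) * (u t + u' t))
      ≤ ∫ t in Ioc x (x+δ), (Real.exp (-t) * (u t + u' t)) := by
  have huc : Continuous u := cont_of_ftc hu hu'loc
  set ψ : ℝ → ℝ := fun t =>
    (Ioc x (x+δ)).indicator (fun _ => (1:ℝ)) t - (Ioc y (y+δ)).indicator (fun _ => (1:ℝ)) t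
    with hψdef
  set φ : ℝ → ℝ := fun t => min (max (t - x) 0) δ - min (max (t - y) 0) δ with hφdef
  have hψmeas : Measurable ψ :=
    ((measurable_const.indicator measurableSet_Ioc).sub
      (measurable_const.indicator measurableSet_Ioc))
  have hψint : Integrable ψ volume := by
    refine Integrable.sub ?_ ?_ <;>
      exact (integrable_indicator_iff measurableSet_Ioc).2
        (integrableOn_const measure_Ioc_lt_top.ne)
  have hψloc : LocallyIntegrable ψ volume := hψint.locallyIntegrable
  have hψbd : ∀ t, |ψ t| ≤ 1 := by
    intro t
    have h1 : ∀ (s : Set ℝ) (t : ℝ), (0:ℝ) ≤ s.indicator (fun _ => (1:ℝ)) t ∧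
        s.indicator (fun _ => (1:ℝ)) t ≤ 1 := by
      intro s t; unfold Set.indicator; split_ifs <;> norm_num
    rw [abs_le]
    constructor
    · have := (h1 (Ioc x (x+δ)) t).1; have := (h1 (Ioc y (y+δ)) t).2; simp only [hψdef]; linarith
    · have := (h1 (Ioc x (x+δ)) t).2; have := (h1 (Ioc y (y+δ)) t).1; simp only [hψdef]; linarith
  have hφftc : ∀ a b : ℝ, φ b - φ a = ∫ s in a..b, ψ s := by
    have key : ∀ a b : ℝ, a ≤ b → φ b - φ a = ∫ s in a..b, ψ s := by
      intro a b hab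
      have e1 := clamp_ftc (p := x) hδ hab
      have e2 := clamp_ftc (p := y) hδ hab
      have hsub : ∫ s in a..b, ψ s
          = (∫ s in a..b, (Ioc x (x+δ)).indicator (fun _ => (1:ℝ)) s)
            - ∫ s in a..b, (Ioc y (y+δ)).indicator (fun _ => (1:ℝ)) s := by
        refine intervalIntegral.integral_sub ?_ ?_ <;>
          exact Integrable.intervalIntegrable
            ((integrable_indicator_iff measurableSet_Ioc).2
              (integrableOn_const measure_Ioc_lt_top.ne))
      rw [hsub, ← e1, ← e2]; simp only [hφdef]; ring
    intro a b
    rcases le_total a b with hab | hab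
    · exact key a b hab
    · have := key b a hab
      rw [intervalIntegral.integral_symm]; linarith
  have hφnn : ∀ t, 0 ≤ φ t := by
    intro t
    have : min (max (t - y) 0) δ ≤ min (max (t - x) 0) δ :=
      min_le_min (max_le_max (by linarith) le_rfl) le_rfl
    simp only [hφdef]; linarith
  have hφbd : ∀ t, φ t ≤ δ := by
    intro t
    have h1 : min (max (t - x) 0) δ ≤ δ := min_le_right _ _
    have h2 : 0 ≤ min (max (t - y) 0) δ := le_min (le_max_right _ _) hδ.le
    simp only [hφdef]; linarith
  have hφzero : ∀ t, t ∉ Icc x (y+δ) → φ t = 0 ∧ ψ t = 0 := by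
    intro t ht
    rw [mem_Icc, not_and_or, not_le, not_le] at ht
    rcases ht with ht | ht
    · constructor
      · have h1 : max (t - x) 0 = 0 := max_eq_right (by linarith)
        have h2 : max (t - y) 0 = 0 := max_eq_right (by linarith)
        simp only [hφdef, h1, h2]; ring
      · have h1 : t ∉ Ioc x (x+δ) := by rw [mem_Ioc]; push_neg; intro hc; linarith
        have h2 : t ∉ Ioc y (y+δ) := by rw [mem_Ioc]; push_neg; intro hc; linarith
        simp only [hψdef, indicator_of_notMem h1, indicator_of_notMem h2, sub_zero]
    · constructor
      · have h1 : min (max (t - x) 0) δ = δ := min_eq_right (le_max_of_le_left (by linarith))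
        have h2 : min (max (t - y) 0) δ = δ := min_eq_right (le_max_of_le_left (by linarith))
        simp only [hφdef, h1, h2]; ring
      · have h1 : t ∉ Ioc x (x+δ) := by rw [mem_Ioc]; push_neg; intro hc; linarith
        have h2 : t ∉ Ioc y (y+δ) := by rw [mem_Ioc]; push_neg; intro hc; linarith
        simp only [hψdef, indicator_of_notMem h1, indicator_of_notMem h2, sub_zero]
  have hφcont : Continuous φ := by
    apply Continuous.sub <;>
      exact (((continuous_id.sub continuous_const).max continuous_const).min continuous_const)
  set h : ℝ → ℝ := fun t => Real.exp (-t) * φ t with hhdef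
  set h' : ℝ → ℝ := fun t => Real.exp (-t) * (ψ t - φ t) with hh'def
  have hexpc : Continuous (fun t : ℝ => Real.exp (-t)) :=
    Real.continuous_exp.comp continuous_neg
  have hexpderiv : ∀ t : ℝ, HasDerivAt (fun s : ℝ => Real.exp (-s)) (-Real.exp (-t)) t := by
    intro t
    have h1 := (Real.hasDerivAt_exp (-t)).comp t (hasDerivAt_neg t)
    simpa [Function.comp_def] using h1
  have hexpftc : ∀ a b : ℝ, Real.exp (-b) - Real.exp (-a) = ∫ t in a..b, -Real.exp (-t) := by
    intro a b
    rw [intervalIntegral.integral_eq_sub_of_hasDerivAt (fun t _ => hexpderiv t)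
      ((hexpc.neg).intervalIntegrable a b)]
  have hexploc : LocallyIntegrable (fun t : ℝ => -Real.exp (-t)) volume :=
    (hexpc.neg).locallyIntegrable
  have hhftc : ∀ a b : ℝ, h b - h a = ∫ t in a..b, h' t := by
    intro a b
    have key : ∀ a b : ℝ, a ≤ b → h b - h a = ∫ t in a..b, h' t := by
      intro a b hab
      have := ftc_mul hexpftc hφftc hexploc hψloc (hexpc.neg).measurable hψmeas hab
      simp only [hhdef]
      rw [this]
      apply intervalIntegral.integral_congr
      intro t _
      simp only [hh'def]; ring
    rcases le_total a b with hab | hab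
    · exact key a b hab
    · have := key b a hab
      rw [intervalIntegral.integral_symm]; linarith
  have hhzero : ∀ t, t ∉ Icc x (y+δ) → h t = 0 ∧ h' t = 0 := by
    intro t ht
    obtain ⟨e1, e2⟩ := hφzero t ht
    constructor <;> simp only [hhdef, hh'def, e1, e2] <;> ring
  have hh'meas : Measurable h' :=
    (hexpc.measurable).mul (hψmeas.sub hφcont.measurable)
  have hhcont : Continuous h := hexpc.mul hφcont
  have htest : TestH1 h h' := by
    refine ⟨?_, hh'meas, hhftc, ?_⟩
    · apply HasCompactSupport.intro isCompact_Icc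
      intro t ht; exact (hhzero t ht).1
    · refine ⟨hh'meas.aestronglyMeasurable, ?_⟩
      have hbd : ∀ t, ‖h' t‖ ≤ ‖(Icc x (y+δ)).indicator
          (fun _ => Real.exp (-x) * (1 + δ)) t‖ := by
        intro t
        by_cases ht : t ∈ Icc x (y+δ)
        · rw [indicator_of_mem ht]
          have h1 : ‖h' t‖ = Real.exp (-t) * |ψ t - φ t| := by
            simp only [hh'def, Real.norm_eq_abs, abs_mul, abs_of_pos (Real.exp_pos _)]
          rw [h1, Real.norm_eq_abs]
          have h2 : |ψ t - φ t| ≤ 1 + δ := by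
            have := hψbd t; have := hφnn t; have := hφbd t
            rw [abs_le] at *; constructor <;> linarith
          have h3 : Real.exp (-t) ≤ Real.exp (-x) := Real.exp_le_exp.2 (by linarith [ht.1])
          have h4 : (0:ℝ) < Real.exp (-x) * (1 + δ) := by positivity
          calc Real.exp (-t) * |ψ t - φ t| ≤ Real.exp (-x) * (1 + δ) := by
                apply mul_le_mul h3 h2 (abs_nonneg _) (Real.exp_pos _).le
            _ ≤ |Real.exp (-x) * (1 + δ)| := le_abs_self _
        · rw [indicator_of_notMem ht, (hhzero t ht).2]
      calc eLpNorm h' 2 volume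
          ≤ eLpNorm ((Icc x (y+δ)).indicator (fun _ => Real.exp (-x) * (1 + δ))) 2 volume :=
            eLpNorm_mono hbd
        _ < ⊤ := by
            rw [eLpNorm_indicator_const measurableSet_Icc (by norm_num) (by norm_num)]
            refine ENNReal.mul_lt_top ENNReal.coe_lt_top ?_
            exact ENNReal.rpow_lt_top_of_nonneg (by norm_num)
              (measure_Icc_lt_top).ne
  have hhnn : ∀ t, 0 ≤ h t := fun t => mul_nonneg (Real.exp_pos _).le (hφnn t)
  have hposval := hpos h h' htest hhnn
  -- integrability facts
  have hK : IsCompact (Icc x (y+δ)) := isCompact_Icc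
  have hIuh : Integrable (fun t => u t * h t) volume := by
    apply integrable_of_zero_off (a := x) (b := y+δ)
    · exact (huc.mul hhcont).continuousOn.integrableOn_compact hK
    · intro t ht; rw [(hhzero t ht).1, mul_zero]
  have hIu'h : Integrable (fun t => u' t * h t) volume := by
    apply integrable_of_zero_off (a := x) (b := y+δ)
    · exact IntegrableOn.mul_continuousOn (hu'loc.integrableOn_isCompact hK)
        hhcont.continuousOn hK
    · intro t ht; rw [(hhzero t ht).1, mul_zero]
  have hIueψ : Integrable (fun t => u t * (Real.exp (-t) * ψ t)) volume := by
    apply integrable_of_zero_off (a := x) (b := y+δ)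
    · have h0 : IntegrableOn (fun t => (u t * Real.exp (-t)) * ψ t) (Icc x (y+δ)) volume :=
        IntegrableOn.continuousOn_mul (huc.mul hexpc).continuousOn
          (hψint.integrableOn) hK
      have heq : (fun t => u t * (Real.exp (-t) * ψ t))
          = fun t => (u t * Real.exp (-t)) * ψ t := by funext t; ring
      rw [heq]; exact h0
    · intro t ht; rw [(hφzero t ht).2, mul_zero, mul_zero]
  have hIu'eψ : Integrable (fun t => u' t * (Real.exp (-t) * ψ t)) volume := by
    apply integrable_of_zero_off (a := x) (b := y+δ)
    · have hbase : IntegrableOn (fun t => u' t * Real.exp (-t)) (Icc x (y+δ)) volume :=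
        IntegrableOn.mul_continuousOn (hu'loc.integrableOn_isCompact hK)
          hexpc.continuousOn hK
      have h0 : IntegrableOn (fun t => ψ t * (u' t * Real.exp (-t))) (Icc x (y+δ)) volume := by
        apply Integrable.bdd_mul (c := 1) hbase hψmeas.aestronglyMeasurable
        exact Eventually.of_forall (fun t => by rw [Real.norm_eq_abs]; exact hψbd t)
      have heq : (fun t => u' t * (Real.exp (-t) * ψ t))
          = fun t => ψ t * (u' t * Real.exp (-t)) := by funext t; ring
      rw [heq]; exact h0
    · intro t ht; rw [(hφzero t ht).2, mul_zero, mul_zero]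
  have hIuh' : Integrable (fun t => u t * h' t) volume := by
    have : (fun t => u t * h' t) = fun t => u t * (Real.exp (-t) * ψ t) - u t * h t := by
      funext t; simp only [hh'def, hhdef]; ring
    rw [this]; exact hIueψ.sub hIuh
  have hIu'h' : Integrable (fun t => u' t * h' t) volume := by
    have : (fun t => u' t * h' t) = fun t => u' t * (Real.exp (-t) * ψ t) - u' t * h t := by
      funext t; simp only [hh'def, hhdef]; ring
    rw [this]; exact hIu'eψ.sub hIu'h
  -- algebraic identities
  have S1 : (∫ t, u' t * h' t)
      = (∫ t, u' t * (Real.exp (-t) * ψ t)) - ∫ t, u' t * h t := by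
    rw [← integral_sub hIu'eψ hIu'h]
    congr 1; funext t; simp only [hh'def, hhdef]; ring
  have S2 : (∫ t, u t * h' t)
      = (∫ t, u t * (Real.exp (-t) * ψ t)) - ∫ t, u t * h t := by
    rw [← integral_sub hIueψ hIuh]
    congr 1; funext t; simp only [hh'def, hhdef]; ring
  have hh'loc : LocallyIntegrable h' volume := by
    apply Integrable.locallyIntegrable
    apply integrable_of_zero_off (a := x) (b := y+δ)
    · have hbase : IntegrableOn (fun t : ℝ => Real.exp (-t)) (Icc x (y+δ)) volume :=
        hexpc.continuousOn.integrableOn_compact hK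
      have h0 : IntegrableOn (fun t => (ψ t - φ t) * Real.exp (-t)) (Icc x (y+δ)) volume := by
        apply Integrable.bdd_mul (c := 1 + δ) hbase (hψmeas.sub hφcont.measurable).aestronglyMeasurable
        refine Eventually.of_forall (fun t => ?_)
        have := hψbd t; have := hφnn t; have := hφbd t
        rw [Real.norm_eq_abs, Pi.sub_apply, abs_le] at *
        constructor <;> linarith
      have heq : h' = fun t => (ψ t - φ t) * Real.exp (-t) := by
        funext t; simp only [hh'def]; ring
      rw [heq]; exact h0
    · intro t ht; exact (hhzero t ht).2
  have hibp := ibp_global hu hhftc hu'loc hh'loc hmu hh'meas (fun t ht => hhzero t ht)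
  -- target computation
  have hfint : ∀ p q : ℝ, IntegrableOn (fun t => Real.exp (-t) * (u t + u' t)) (Ioc p q) volume := by
    intro p q
    have h1 : IntegrableOn (fun t => Real.exp (-t) * u t) (Ioc p q) volume :=
      ((hexpc.mul huc).continuousOn.integrableOn_compact isCompact_Icc).mono_set
        Ioc_subset_Icc_self
    have h2 : IntegrableOn (fun t => Real.exp (-t) * u' t) (Ioc p q) volume := by
      have := IntegrableOn.continuousOn_mul hexpc.continuousOn
        (hu'loc.integrableOn_isCompact (isCompact_Icc (a := p) (b := q))) isCompact_Icc
      exact this.mono_set Ioc_subset_Icc_self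
    have heq : (fun t => Real.exp (-t) * (u t + u' t))
        = fun t => Real.exp (-t) * u t + Real.exp (-t) * u' t := by funext t; ring
    rw [heq]; exact h1.add h2
  have hsum : (∫ t, u t * (Real.exp (-t) * ψ t)) + (∫ t, u' t * (Real.exp (-t) * ψ t))
      = (∫ t in Ioc x (x+δ), Real.exp (-t) * (u t + u' t))
        - ∫ t in Ioc y (y+δ), Real.exp (-t) * (u t + u' t) := by
    rw [← integral_add hIueψ hIu'eψ]
    have hpt : ∀ t, u t * (Real.exp (-t) * ψ t) + u' t * (Real.exp (-t) * ψ t)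
        = (Ioc x (x+δ)).indicator (fun s => Real.exp (-s) * (u s + u' s)) t
          - (Ioc y (y+δ)).indicator (fun s => Real.exp (-s) * (u s + u' s)) t := by
      intro t
      simp only [hψdef, Set.indicator]
      split_ifs <;> ring
    rw [integral_congr_ae (Eventually.of_forall hpt)]
    rw [integral_sub ((integrable_indicator_iff measurableSet_Ioc).2 (hfint _ _))
      ((integrable_indicator_iff measurableSet_Ioc).2 (hfint _ _))]
    rw [integral_indicator measurableSet_Ioc, integral_indicator measurableSet_Ioc]
  linarith [hposval, S1, S2, hibp, hsum]


lemma keyid (s v : ℝ) : Real.exp s * (Real.exp (-s) * v)^2 = Real.exp (-s) * v^2 := by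
  rw [Real.exp_neg]
  have h := (Real.exp_pos s).ne'
  field_simp


end AuxLemmas

/-- The map `(u,μ) ↦ u` is a bijection between `𝒟⁺` and the set of
real-valued `u ∈ H¹_loc(ℝ)` such that `u - u''` is a positive Borel measure,
`u + u' ∈ L^∞(ℝ)` and `∫_{-∞}^0 e^{-x}(u² + u'²) dx < ∞`: it maps into this set, is
injective on `𝒟⁺` (the pair `(u,μ)` is determined by `u`), and onto. -/
theorem statement16 :
    (∀ D : PhaseD, D.υ = 0 → (∃ ν : Measure ℝ, PosMeasRepr D ν) → GoodPlusU D.u) ∧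
      (∀ D₁ D₂ : PhaseD, D₁.υ = 0 → D₂.υ = 0 →
        (∃ ν : Measure ℝ, PosMeasRepr D₁ ν) → (∃ ν : Measure ℝ, PosMeasRepr D₂ ν) →
        D₁.u = D₂.u → D₁.μ = D₂.μ) ∧
      ∀ u : ℝ → ℝ, GoodPlusU u →
        ∃ D : PhaseD, D.υ = 0 ∧ (∃ ν : Measure ℝ, PosMeasRepr D ν) ∧ D.u = u := by
  refine ⟨?_, ?_, ?_⟩
  · -- maps into
    rintro D hυ0 ⟨ν, hν⟩
    set u := D.u with hu
    set u' := D.u' with hu'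
    have huc : Continuous u := cont_of_ftc D.ftc D.locInt
    have hpos : ∀ h h' : ℝ → ℝ, TestH1 h h' → (∀ t, 0 ≤ h t) →
        0 ≤ (∫ t, u t * h t) + ∫ t, u' t * h' t := by
      intro h h' ht hnn
      rw [← hν h h' ht]
      exact integral_nonneg hnn
    set f : ℝ → ℝ := fun t => Real.exp (-t) * (u t + u' t) with hf
    have hfloc : LocallyIntegrable f volume := by
      have h1 : LocallyIntegrable (fun t => Real.exp (-t) * u t) volume :=
        ((Real.continuous_exp.comp continuous_neg).mul huc).locallyIntegrable
      have h2 : LocallyIntegrable (fun t => Real.exp (-t) * u' t) volume := by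
        rw [locallyIntegrable_iff]
        intro K hK
        exact IntegrableOn.continuousOn_mul
          (Real.continuous_exp.comp continuous_neg).continuousOn
          (D.locInt.integrableOn_isCompact hK) hK
      have heq : f = fun t => Real.exp (-t) * u t + Real.exp (-t) * u' t := by
        funext t; simp only [hf]; ring
      rw [heq]; exact h1.add h2
    have hmono : ∀ x y : ℝ, x ≤ y → ∀ δ : ℝ, 0 < δ →
        ∫ t in Ioc y (y+δ), f t ≤ ∫ t in Ioc x (x+δ), f t := by
      intro x y hxy δ hδ
      exact mono_avg D.ftc D.locInt D.meas_u' hpos hxy hδ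
    obtain ⟨g, hganti, hfg⟩ := exists_antitone_rep hfloc hmono
    -- transferred conditions
    have hm1 : (∫⁻ s in Iio (0:ℝ), ENNReal.ofReal (Real.exp (-s) * ((u s)^2 + (u' s)^2))) < ⊤ := by
      have := D.minusCond
      exact lt_of_le_of_lt le_self_add this
    have hminusg : (∫⁻ s in Iio (0:ℝ), ENNReal.ofReal (Real.exp s * (g s)^2)) < ⊤ := by
      have hstep1 : (∫⁻ s in Iio (0:ℝ), ENNReal.ofReal (Real.exp s * (f s)^2))
          ≤ ENNReal.ofReal 2 * ∫⁻ s in Iio (0:ℝ),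
            ENNReal.ofReal (Real.exp (-s) * ((u s)^2 + (u' s)^2)) := by
        rw [← lintegral_const_mul' _ _ ENNReal.ofReal_ne_top]
        apply lintegral_mono
        intro s
        dsimp only
        rw [← ENNReal.ofReal_mul (by norm_num : (0:ℝ) ≤ 2)]
        apply ENNReal.ofReal_le_ofReal
        rw [hf, keyid]
        nlinarith [Real.exp_pos (-s), sq_nonneg (u s - u' s), sq_nonneg (u s + u' s)]
      have hcongr : (∫⁻ s in Iio (0:ℝ), ENNReal.ofReal (Real.exp s * (g s)^2))
          = ∫⁻ s in Iio (0:ℝ), ENNReal.ofReal (Real.exp s * (f s)^2) := by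
        apply lintegral_congr_ae
        filter_upwards [ae_restrict_of_ae hfg] with s hs
        rw [hs]
      rw [hcongr]
      exact lt_of_le_of_lt hstep1 (ENNReal.mul_lt_top ENNReal.ofReal_lt_top hm1)
    have hplusg : Filter.limsup (fun x : ℝ => ENNReal.ofReal (Real.exp x) *
        ∫⁻ s in Ioi x, ENNReal.ofReal (Real.exp s * (g s)^2)) Filter.atTop < ⊤ := by
      have hp := D.plusCond
      rw [hυ0] at hp
      simp only [Measure.restrict_zero, lintegral_zero_measure, add_zero] at hp
      have hx : ∀ x : ℝ, (∫⁻ s in Ioi x, ENNReal.ofReal (Real.exp s * (g s)^2))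
          = ∫⁻ s in Ioi x, ENNReal.ofReal (Real.exp (-s) * (u s + u' s)^2) := by
        intro x
        have e1 : (∫⁻ s in Ioi x, ENNReal.ofReal (Real.exp s * (g s)^2))
            = ∫⁻ s in Ioi x, ENNReal.ofReal (Real.exp s * (f s)^2) := by
          apply lintegral_congr_ae
          filter_upwards [ae_restrict_of_ae hfg] with s hs
          rw [hs]
        rw [e1]
        apply lintegral_congr
        intro s
        rw [hf, keyid]
      have : (fun x : ℝ => ENNReal.ofReal (Real.exp x) *
          ∫⁻ s in Ioi x, ENNReal.ofReal (Real.exp s * (g s)^2))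
          = fun x : ℝ => ENNReal.ofReal (Real.exp x) *
          ∫⁻ s in Ioi x, ENNReal.ofReal (Real.exp (-s) * (u s + u' s)^2) := by
        funext x; rw [hx x]
      rw [this]
      exact hp
    obtain ⟨C, hC⟩ := bounded_of_antitone hganti hminusg hplusg
    have hmem : MemLp (fun x => u x + u' x) ⊤ volume := by
      apply memLp_top_of_bound ((huc.measurable.add D.meas_u').aestronglyMeasurable) C
      filter_upwards [hfg] with t htg
      have hvt : u t + u' t = Real.exp t * g t := by
        have : Real.exp t * f t = u t + u' t := by
          rw [hf, ← mul_assoc, ← Real.exp_add]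
          simp
        rw [← this, htg]
      rw [Real.norm_eq_abs]; show |u t + u' t| ≤ C; rw [hvt]
      exact hC t
    exact ⟨u', ν, D.meas_u', D.ftc, D.locInt, D.locSq, hν, hmem, hm1⟩
  · -- injective
    rintro D₁ D₂ hυ1 hυ2 - - huu
    have hft2 : ∀ a b : ℝ, D₁.u b - D₁.u a = ∫ t in a..b, D₂.u' t := by
      intro a b; rw [huu]; exact D₂.ftc a b
    have hae : D₁.u' =ᵐ[volume] D₂.u' :=
      deriv_ae_unique D₁.ftc hft2 D₁.locInt D₂.locInt
    rw [D₁.decomp, D₂.decomp, hυ1, hυ2]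
    congr 1
    apply withDensity_congr_ae
    filter_upwards [hae] with x hx
    rw [huu, hx]
  · -- surjective
    rintro u ⟨u', ν, hmu, hftc, hloc, hsq, hν, hmem, hminus⟩
    have hCe : eLpNormEssSup (fun x => u x + u' x) volume < ⊤ := by
      have := hmem.2
      rwa [eLpNorm_exponent_top] at this
    set C : ℝ := (eLpNormEssSup (fun x => u x + u' x) volume).toReal with hCdef
    have hbd : ∀ᵐ t ∂(volume : Measure ℝ), |u t + u' t| ≤ C := by
      filter_upwards [enorm_ae_le_eLpNormEssSup (fun x => u x + u' x) volume] with t ht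
      have : (‖u t + u' t‖₊ : ℝ≥0∞).toReal ≤ C :=
        ENNReal.toReal_mono hCe.ne ht
      simpa [Real.norm_eq_abs] using this
    have hJ : ∀ x : ℝ, (∫⁻ s in Ioi x, ENNReal.ofReal (Real.exp (-s)))
        = ENNReal.ofReal (Real.exp (-x)) := by
      intro x
      rw [← ofReal_integral_eq_lintegral_ofReal]
      · rw [integral_exp_neg_Ioi]
      · have := exp_neg_integrableOn_Ioi x one_pos
        apply this.congr_fun ?_ measurableSet_Ioi
        intro s _; simp
      · exact Eventually.of_forall (fun s => (Real.exp_pos _).le)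
    have hplus : Filter.limsup (fun x : ℝ =>
        ENNReal.ofReal (Real.exp x) *
          ((∫⁻ s in Ioi x, ENNReal.ofReal (Real.exp (-s) * (u s + u' s) ^ 2)) +
            ∫⁻ s in Ici x, ENNReal.ofReal (Real.exp (-s)) ∂(0 : Measure ℝ))) Filter.atTop < ⊤ := by
      have hbound : ∀ x : ℝ, ENNReal.ofReal (Real.exp x) *
          ((∫⁻ s in Ioi x, ENNReal.ofReal (Real.exp (-s) * (u s + u' s) ^ 2)) +
            ∫⁻ s in Ici x, ENNReal.ofReal (Real.exp (-s)) ∂(0 : Measure ℝ))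
          ≤ ENNReal.ofReal (C^2) := by
        intro x
        have h1 : (∫⁻ s in Ioi x, ENNReal.ofReal (Real.exp (-s) * (u s + u' s) ^ 2))
            ≤ ENNReal.ofReal (C^2) * ENNReal.ofReal (Real.exp (-x)) := by
          calc (∫⁻ s in Ioi x, ENNReal.ofReal (Real.exp (-s) * (u s + u' s) ^ 2))
              ≤ ∫⁻ s in Ioi x, ENNReal.ofReal (C^2) * ENNReal.ofReal (Real.exp (-s)) := by
                apply lintegral_mono_ae
                filter_upwards [ae_restrict_of_ae hbd] with s hs
                rw [← ENNReal.ofReal_mul (sq_nonneg C)]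
                apply ENNReal.ofReal_le_ofReal
                have h2 : (u s + u' s)^2 ≤ C^2 := by
                  have := abs_nonneg (u s + u' s)
                  nlinarith [sq_abs (u s + u' s)]
                nlinarith [Real.exp_pos (-s)]
            _ = ENNReal.ofReal (C^2) * ∫⁻ s in Ioi x, ENNReal.ofReal (Real.exp (-s)) :=
                lintegral_const_mul' _ _ ENNReal.ofReal_ne_top
            _ = ENNReal.ofReal (C^2) * ENNReal.ofReal (Real.exp (-x)) := by rw [hJ]
        calc ENNReal.ofReal (Real.exp x) *
            ((∫⁻ s in Ioi x, ENNReal.ofReal (Real.exp (-s) * (u s + u' s) ^ 2)) +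
              ∫⁻ s in Ici x, ENNReal.ofReal (Real.exp (-s)) ∂(0 : Measure ℝ))
            = ENNReal.ofReal (Real.exp x) *
              (∫⁻ s in Ioi x, ENNReal.ofReal (Real.exp (-s) * (u s + u' s) ^ 2)) := by
              simp
          _ ≤ ENNReal.ofReal (Real.exp x) * (ENNReal.ofReal (C^2) * ENNReal.ofReal (Real.exp (-x))) :=
              mul_le_mul_right h1 _
          _ = ENNReal.ofReal (C^2) := by
              rw [show ENNReal.ofReal (Real.exp x) *
                    (ENNReal.ofReal (C^2) * ENNReal.ofReal (Real.exp (-x)))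
                  = (ENNReal.ofReal (Real.exp x) * ENNReal.ofReal (Real.exp (-x)))
                    * ENNReal.ofReal (C^2) by ring,
                ← ENNReal.ofReal_mul (Real.exp_pos x).le, ← Real.exp_add]
              simp
      have hle : Filter.limsup (fun x : ℝ =>
          ENNReal.ofReal (Real.exp x) *
            ((∫⁻ s in Ioi x, ENNReal.ofReal (Real.exp (-s) * (u s + u' s) ^ 2)) +
              ∫⁻ s in Ici x, ENNReal.ofReal (Real.exp (-s)) ∂(0 : Measure ℝ))) Filter.atTop
          ≤ ENNReal.ofReal (C^2) :=
        Filter.limsup_le_of_le (by isBoundedDefault) (Eventually.of_forall hbound)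
      exact lt_of_le_of_lt hle ENNReal.ofReal_lt_top
    refine ⟨{ u := u, u' := u',
              μ := volume.withDensity (fun x => ENNReal.ofReal ((u x) ^ 2 + (u' x) ^ 2)),
              υ := 0,
              meas_u' := hmu, ftc := hftc, locInt := hloc, locSq := hsq,
              decomp := (zero_add _).symm,
              minusCond := ?_, plusCond := hplus }, rfl, ⟨ν, hν⟩, rfl⟩
    simp only [Measure.restrict_zero, lintegral_zero_measure, add_zero]
    exact hminus

end
end

section
/- Let (u, μ) be a pair in 𝒟 such that the function u + u' belongs to L²(ℝ) and the measure υ is finite (υ(ℝ) < ∞). Then u belongs to H¹(ℝ), one has ‖u + u'‖²_{L²(ℝ)} = ‖u‖²_{H¹(ℝ)} := ∫_ℝ ( u(x)² + u'(x)² ) dx, and the measure μ is finite with μ(ℝ) = ‖u‖²_{H¹(ℝ)} + υ(ℝ). -/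
open MeasureTheory Filter Set

noncomputable section

private lemma key_sq_le {u g : ℝ → ℝ} (hgm : Measurable g)
    (hgi : ∀ a b : ℝ, IntervalIntegrable g volume a b)
    (hu : Continuous u)
    (hftc : ∀ a b : ℝ, u b - u a = ∫ x in a..b, g x)
    {a b : ℝ} (hab : a ≤ b) :
    u b ^ 2 - u a ^ 2 = ∫ x in a..b, 2 * u x * g x := by
  set ρ : Measure ℝ := volume.restrict (Ioc a b) with hρ
  have hgρ : Integrable g ρ := (hgi a b).1
  set F : ℝ → ℝ := fun x => ∫ t in a..x, g t with hF
  have hFcont : Continuous F := intervalIntegral.continuous_primitive hgi a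
  have hFval : ∀ x ∈ Ioc a b, ∫ t in Iic x, g t ∂ρ = F x := by
    intro x hx
    rw [hρ, Measure.restrict_restrict measurableSet_Iic]
    have hset : Iic x ∩ Ioc a b = Ioc a x := by
      ext t
      simp only [mem_inter_iff, mem_Iic, mem_Ioc]
      exact ⟨fun h => ⟨h.2.1, h.1⟩, fun h => ⟨h.2, h.1, h.2.trans hx.2⟩⟩
    rw [hset]
    show ∫ t in Ioc a x, g t = ∫ t in a..x, g t
    exact (intervalIntegral.integral_of_le hx.1.le).symm
  set G : ℝ × ℝ → ℝ := fun p => g p.1 * g p.2 with hG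
  set P : Measure (ℝ × ℝ) := ρ.prod ρ with hP
  have hGint : Integrable G P := hgρ.mul_prod hgρ
  have hS₁ : MeasurableSet {p : ℝ × ℝ | p.1 ≤ p.2} :=
    measurableSet_le measurable_fst measurable_snd
  have hS₂ : MeasurableSet {p : ℝ × ℝ | p.2 ≤ p.1} :=
    measurableSet_le measurable_snd measurable_fst
  have hdiag : MeasurableSet {p : ℝ × ℝ | p.1 = p.2} :=
    measurableSet_eq_fun measurable_fst measurable_snd
  have hI₁ : Integrable ({p : ℝ × ℝ | p.1 ≤ p.2}.indicator G) P := hGint.indicator hS₁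
  have hI₂ : Integrable ({p : ℝ × ℝ | p.2 ≤ p.1}.indicator G) P := hGint.indicator hS₂
  -- J₂ computation via Fubini
  have hJ₂ : ∫ p, ({p : ℝ × ℝ | p.2 ≤ p.1}.indicator G) p ∂P = ∫ x, g x * F x ∂ρ := by
    rw [hP, MeasureTheory.integral_prod _ hI₂]
    refine integral_congr_ae ?_
    filter_upwards [ae_restrict_mem measurableSet_Ioc] with x hx
    have hfun : (fun y => ({p : ℝ × ℝ | p.2 ≤ p.1}.indicator G) (x, y)) =
        (Iic x).indicator (fun y => g x * g y) := by
      funext y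
      by_cases h : y ≤ x <;>
        simp [Set.indicator_apply, h, hG]
    rw [hfun, MeasureTheory.integral_indicator measurableSet_Iic, MeasureTheory.integral_const_mul, hFval x hx]
  -- J₁ = J₂ by swapping
  have hswap : ∀ p : ℝ × ℝ,
      ({p : ℝ × ℝ | p.1 ≤ p.2}.indicator G) p = ({p : ℝ × ℝ | p.2 ≤ p.1}.indicator G) p.swap := by
    intro p
    by_cases h : p.1 ≤ p.2 <;>
      simp [Set.indicator_apply, h, hG, Prod.swap, mul_comm]
  have hJ₁ : ∫ p, ({p : ℝ × ℝ | p.1 ≤ p.2}.indicator G) p ∂P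
      = ∫ p, ({p : ℝ × ℝ | p.2 ≤ p.1}.indicator G) p ∂P := by
    rw [integral_congr_ae (Filter.Eventually.of_forall hswap)]
    exact MeasureTheory.integral_prod_swap _
  -- diagonal is null
  have hdiag0 : P {p : ℝ × ℝ | p.1 = p.2} = 0 := by
    rw [hP, Measure.prod_apply hdiag]
    have : ∀ x : ℝ, ρ (Prod.mk x ⁻¹' {p : ℝ × ℝ | p.1 = p.2}) = 0 := by
      intro x
      have hpre : (Prod.mk x ⁻¹' {p : ℝ × ℝ | p.1 = p.2}) = {x} := by
        ext y; simp [eq_comm]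
      rw [hpre, hρ, Measure.restrict_apply (measurableSet_singleton x)]
      exact measure_mono_null inter_subset_left Real.volume_singleton
    simp [this]
  have hdiagI : ∫ p, ({p : ℝ × ℝ | p.1 = p.2}.indicator G) p ∂P = 0 := by
    rw [MeasureTheory.integral_indicator hdiag, Measure.restrict_eq_zero.mpr hdiag0, integral_zero_measure]
  -- pointwise sum identity
  have hpt : ∀ p : ℝ × ℝ, ({p : ℝ × ℝ | p.1 ≤ p.2}.indicator G) p
      + ({p : ℝ × ℝ | p.2 ≤ p.1}.indicator G) p
      = G p + ({p : ℝ × ℝ | p.1 = p.2}.indicator G) p := by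
    intro p
    rcases lt_trichotomy p.1 p.2 with h | h | h
    · simp [Set.indicator_apply, h.le, not_le.mpr h, h.ne]
    · simp [Set.indicator_apply, h, le_of_eq h]
    · simp [Set.indicator_apply, h.le, not_le.mpr h, h.ne']
  have hsum : (2 : ℝ) * ∫ x, g x * F x ∂ρ = (∫ x, g x ∂ρ) ^ 2 := by
    have h1 : ∫ p, (({p : ℝ × ℝ | p.1 ≤ p.2}.indicator G) p
        + ({p : ℝ × ℝ | p.2 ≤ p.1}.indicator G) p) ∂P
        = ∫ p, (G p + ({p : ℝ × ℝ | p.1 = p.2}.indicator G) p) ∂P := by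
      exact integral_congr_ae (Filter.Eventually.of_forall hpt)
    rw [integral_add hI₁ hI₂, integral_add hGint (hGint.indicator hdiag)] at h1
    rw [hJ₁, hJ₂, hdiagI, add_zero] at h1
    have h2 : ∫ p, G p ∂P = (∫ x, g x ∂ρ) * (∫ x, g x ∂ρ) := by
      rw [hP, hG]
      exact MeasureTheory.integral_prod_mul g g
    rw [h2] at h1
    rw [two_mul, h1, sq]
  -- now assemble
  have hgint_ab : ∫ x, g x ∂ρ = u b - u a := by
    rw [hftc a b, intervalIntegral.integral_of_le hab]
  have huF : ∀ x, u x = u a + F x := by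
    intro x
    have := hftc a x
    rw [hF]; linarith
  have hFint : Integrable (fun x => F x * g x) ρ := by
    have hIcc : IntegrableOn g (Icc a b) volume := by
      rw [integrableOn_Icc_iff_integrableOn_Ioc]
      exact (hgi a b).1
    have := MeasureTheory.IntegrableOn.continuousOn_mul hFcont.continuousOn hIcc isCompact_Icc
    exact this.mono_set Ioc_subset_Icc_self
  have hfinal : ∫ x in a..b, 2 * u x * g x
      = 2 * u a * (u b - u a) + 2 * ∫ x, g x * F x ∂ρ := by
    rw [intervalIntegral.integral_of_le hab, ← hρ]
    have : ∀ x, 2 * u x * g x = 2 * u a * g x + 2 * (F x * g x) := by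
      intro x; rw [huF x]; ring
    rw [show (fun x => 2 * u x * g x) = fun x => 2 * u a * g x + 2 * (F x * g x) from
      funext this]
    rw [integral_add (hgρ.const_mul _) (hFint.const_mul 2), MeasureTheory.integral_const_mul,
      MeasureTheory.integral_const_mul, hgint_ab]
    congr 1
    exact mul_left_cancel₀ (two_ne_zero (α := ℝ))
      (by rw [integral_congr_ae (Filter.Eventually.of_forall fun x => mul_comm (F x) (g x))])
  rw [hfinal]
  have h2J : 2 * ∫ x, g x * F x ∂ρ = (u b - u a) ^ 2 := by rw [hsum, hgint_ab]
  rw [h2J]; ring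

private lemma key_sq {u g : ℝ → ℝ} (hgm : Measurable g)
    (hgi : ∀ a b : ℝ, IntervalIntegrable g volume a b)
    (hu : Continuous u)
    (hftc : ∀ a b : ℝ, u b - u a = ∫ x in a..b, g x)
    (a b : ℝ) :
    u b ^ 2 - u a ^ 2 = ∫ x in a..b, 2 * u x * g x := by
  rcases le_total a b with h | h
  · exact key_sq_le hgm hgi hu hftc h
  · have h2 := key_sq_le hgm hgi hu hftc h
    rw [intervalIntegral.integral_symm]
    linarith


/-- If `(u,μ) ∈ 𝒟`, `u + u' ∈ L²(ℝ)` and `υ(ℝ) < ∞`, then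
`u ∈ H¹(ℝ)`, `‖u + u'‖²_{L²} = ‖u‖²_{H¹} = ∫ (u² + u'²)`, and `μ` is finite with
`μ(ℝ) = ‖u‖²_{H¹} + υ(ℝ)`. -/
theorem statement19 (D : PhaseD)
    (h1 : MemLp (fun x => D.u x + D.u' x) 2 volume)
    (h2 : D.υ Set.univ < ⊤) :
    MemLp D.u 2 volume ∧ MemLp D.u' 2 volume ∧
      (∫ x, (D.u x + D.u' x) ^ 2) = ∫ x, ((D.u x) ^ 2 + (D.u' x) ^ 2) ∧
      D.μ Set.univ =
        ENNReal.ofReal (∫ x, ((D.u x) ^ 2 + (D.u' x) ^ 2)) + D.υ Set.univ := by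
  obtain ⟨u, g, μ, υ, hgm, hftc, hloc, hlocsq, hdecomp, hminus, hplus⟩ := D
  simp only at h1 h2 ⊢
  -- basic facts
  have hgi : ∀ a b : ℝ, IntervalIntegrable g volume a b := fun a b =>
    (hloc.integrableOn_isCompact isCompact_uIcc).intervalIntegrable
  have hucont : Continuous u := by
    have hrepr : u = fun x => u 0 + ∫ t in (0:ℝ)..x, g t := by
      funext x
      have := hftc 0 x
      linarith
    rw [hrepr]
    exact continuous_const.add (intervalIntegral.continuous_primitive hgi 0)
  have key := key_sq hgm hgi hucont hftc
  have hum : Measurable u := hucont.measurable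
  -- f² is integrable
  have hf2 : Integrable (fun x => (u x + g x) ^ 2) volume :=
    (memLp_two_iff_integrable_sq h1.aestronglyMeasurable).mp h1
  -- u takes small values arbitrarily far to the left
  have hsmall : ∀ ε : ℝ, 0 < ε → ∀ M : ℝ, ∃ c, c ≤ M ∧ u c ^ 2 ≤ ε := by
    intro ε hε M
    by_contra hcon
    push_neg at hcon
    have hA : (∫⁻ s in Iio (0:ℝ), ENNReal.ofReal (Real.exp (-s) * (u s ^ 2 + g s ^ 2))) < ⊤ :=
      (ENNReal.add_lt_top.mp hminus).1
    have hge : ∀ s ∈ Iio (min M 0), ENNReal.ofReal ε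
        ≤ ENNReal.ofReal (Real.exp (-s) * (u s ^ 2 + g s ^ 2)) := by
      intro s hs
      apply ENNReal.ofReal_le_ofReal
      have hs1 : s < 0 := lt_of_lt_of_le hs (min_le_right _ _)
      have h1 : (1:ℝ) ≤ Real.exp (-s) := Real.one_le_exp_iff.mpr (by linarith)
      have h2 : ε < u s ^ 2 := hcon s (le_of_lt (lt_of_lt_of_le hs (min_le_left _ _)))
      nlinarith [sq_nonneg (g s), Real.exp_pos (-s)]
    have hbig : (⊤:ENNReal)
        ≤ ∫⁻ s in Iio (0:ℝ), ENNReal.ofReal (Real.exp (-s) * (u s ^ 2 + g s ^ 2)) := by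
      calc (⊤:ENNReal) = ENNReal.ofReal ε * volume (Iio (min M 0)) := by
            rw [Real.volume_Iio, ENNReal.mul_top (ENNReal.ofReal_pos.mpr hε).ne']
        _ = ∫⁻ _ in Iio (min M 0), ENNReal.ofReal ε := (setLIntegral_const _ _).symm
        _ ≤ ∫⁻ s in Iio (min M 0), ENNReal.ofReal (Real.exp (-s) * (u s ^ 2 + g s ^ 2)) :=
            setLIntegral_mono' measurableSet_Iio hge
        _ ≤ _ := lintegral_mono_set (Iio_subset_Iio (min_le_right _ _))
    exact absurd (lt_of_le_of_lt hbig hA) (by simp)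
  -- uniform bound on compact intervals
  have hbound : ∀ n : ℕ, (∫⁻ x in Icc (-(n:ℝ)) n, ENNReal.ofReal (u x ^ 2 + g x ^ 2))
      ≤ ENNReal.ofReal (∫ x, (u x + g x) ^ 2) := by
    intro n
    refine ENNReal.le_of_forall_pos_le_add fun ε hε _ => ?_
    obtain ⟨c, hcM, hcε⟩ := hsmall ε (by exact_mod_cast hε) (-(n:ℝ))
    have hnn : (0:ℝ) ≤ (n:ℝ) := n.cast_nonneg
    have hcn : c ≤ (n:ℝ) := by linarith
    have hgIcc : IntegrableOn g (Icc c n) volume := hloc.integrableOn_isCompact isCompact_Icc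
    have hu2I : IntegrableOn (fun x => u x ^ 2) (Icc c n) volume :=
      (hucont.pow 2).integrableOn_Icc
    have hg2I : IntegrableOn (fun x => g x ^ 2) (Icc c n) volume :=
      hlocsq.integrableOn_isCompact isCompact_Icc
    have hsumI : IntegrableOn (fun x => u x ^ 2 + g x ^ 2) (Icc c n) volume := hu2I.add hg2I
    have hcrossI : IntegrableOn (fun x => 2 * u x * g x) (Icc c n) volume :=
      MeasureTheory.IntegrableOn.continuousOn_mul
        (continuous_const.mul hucont).continuousOn hgIcc isCompact_Icc
    have e1 : ∫ x in Icc c n, (u x + g x) ^ 2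
        = ∫ x in Icc c n, ((u x ^ 2 + g x ^ 2) + 2 * u x * g x) :=
      integral_congr_ae (Filter.Eventually.of_forall fun x => by ring)
    have e2 : ∫ x in Icc c n, ((u x ^ 2 + g x ^ 2) + 2 * u x * g x)
        = (∫ x in Icc c n, (u x ^ 2 + g x ^ 2)) + ∫ x in Icc c n, 2 * u x * g x :=
      integral_add hsumI hcrossI
    have e3 : ∫ x in Icc c n, 2 * u x * g x = u n ^ 2 - u c ^ 2 := by
      rw [MeasureTheory.integral_Icc_eq_integral_Ioc, ← intervalIntegral.integral_of_le hcn]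
      exact (key c n).symm
    have h4 : ∫ x in Icc c n, (u x + g x) ^ 2 ≤ ∫ x, (u x + g x) ^ 2 :=
      setIntegral_le_integral hf2 (Filter.Eventually.of_forall fun x => sq_nonneg _)
    have hle : ∫ x in Icc c n, (u x ^ 2 + g x ^ 2) ≤ (∫ x, (u x + g x) ^ 2) + ε := by
      have h5 : (0:ℝ) ≤ u (n:ℝ) ^ 2 := sq_nonneg _
      linarith
    calc ∫⁻ x in Icc (-(n:ℝ)) n, ENNReal.ofReal (u x ^ 2 + g x ^ 2)
        ≤ ∫⁻ x in Icc c n, ENNReal.ofReal (u x ^ 2 + g x ^ 2) :=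
          lintegral_mono_set (Icc_subset_Icc hcM le_rfl)
      _ = ENNReal.ofReal (∫ x in Icc c n, (u x ^ 2 + g x ^ 2)) :=
          (MeasureTheory.ofReal_integral_eq_lintegral_ofReal hsumI
            (Filter.Eventually.of_forall fun x => by positivity)).symm
      _ ≤ ENNReal.ofReal ((∫ x, (u x + g x) ^ 2) + ε) := ENNReal.ofReal_le_ofReal hle
      _ ≤ ENNReal.ofReal (∫ x, (u x + g x) ^ 2) + ENNReal.ofReal ε := ENNReal.ofReal_add_le
      _ = ENNReal.ofReal (∫ x, (u x + g x) ^ 2) + ε := by rw [ENNReal.ofReal_coe_nnreal]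
  -- total bound
  have htotal : (∫⁻ x, ENNReal.ofReal (u x ^ 2 + g x ^ 2))
      ≤ ENNReal.ofReal (∫ x, (u x + g x) ^ 2) := by
    have hmeas : Measurable fun x => ENNReal.ofReal (u x ^ 2 + g x ^ 2) :=
      ((hum.pow_const 2).add (hgm.pow_const 2)).ennreal_ofReal
    have hrepr : (∫⁻ x, ENNReal.ofReal (u x ^ 2 + g x ^ 2))
        = ⨆ n : ℕ, ∫⁻ x in Icc (-(n:ℝ)) n, ENNReal.ofReal (u x ^ 2 + g x ^ 2) := by
      have hptw : ∀ x : ℝ, (⨆ n : ℕ, (Icc (-(n:ℝ)) n).indicator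
          (fun y => ENNReal.ofReal (u y ^ 2 + g y ^ 2)) x)
          = ENNReal.ofReal (u x ^ 2 + g x ^ 2) := by
        intro x
        refine le_antisymm (iSup_le fun n => Set.indicator_le_self _ _ x) ?_
        obtain ⟨n, hn⟩ := exists_nat_ge |x|
        rw [abs_le] at hn
        refine le_iSup_of_le n ?_
        rw [Set.indicator_of_mem (Set.mem_Icc.mpr ⟨hn.1, hn.2⟩)]
      have hmono : Monotone fun n : ℕ => (Icc (-(n:ℝ)) n).indicator
          (fun y => ENNReal.ofReal (u y ^ 2 + g y ^ 2)) := by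
        intro m n hmn
        refine Set.indicator_le_indicator_of_subset
          (Icc_subset_Icc (by exact_mod_cast neg_le_neg (Nat.cast_le.mpr hmn))
            (by exact_mod_cast Nat.cast_le.mpr hmn)) (fun _ => zero_le)
      calc (∫⁻ x, ENNReal.ofReal (u x ^ 2 + g x ^ 2))
          = ∫⁻ x, ⨆ n : ℕ, (Icc (-(n:ℝ)) n).indicator
              (fun y => ENNReal.ofReal (u y ^ 2 + g y ^ 2)) x := by
            exact (lintegral_congr hptw).symm
        _ = ⨆ n : ℕ, ∫⁻ x, (Icc (-(n:ℝ)) n).indicator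
              (fun y => ENNReal.ofReal (u y ^ 2 + g y ^ 2)) x :=
            lintegral_iSup (fun n => hmeas.indicator measurableSet_Icc) hmono
        _ = ⨆ n : ℕ, ∫⁻ x in Icc (-(n:ℝ)) n, ENNReal.ofReal (u x ^ 2 + g x ^ 2) := by
            refine iSup_congr fun n => ?_
            exact lintegral_indicator measurableSet_Icc _
    rw [hrepr]
    exact iSup_le hbound
  have htotal_lt : (∫⁻ x, ENNReal.ofReal (u x ^ 2 + g x ^ 2)) < ⊤ :=
    lt_of_le_of_lt htotal ENNReal.ofReal_lt_top
  -- integrability of u², g², and the cross term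
  have hu2 : Integrable (fun x => u x ^ 2) volume := by
    refine ⟨(hucont.pow 2).aestronglyMeasurable, ?_⟩
    rw [hasFiniteIntegral_iff_ofReal (Filter.Eventually.of_forall fun x => sq_nonneg _)]
    exact lt_of_le_of_lt (lintegral_mono fun x =>
      ENNReal.ofReal_le_ofReal (by nlinarith [sq_nonneg (g x)])) htotal_lt
  have hg2 : Integrable (fun x => g x ^ 2) volume := by
    refine ⟨(hgm.pow_const 2).aestronglyMeasurable, ?_⟩
    rw [hasFiniteIntegral_iff_ofReal (Filter.Eventually.of_forall fun x => sq_nonneg _)]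
    exact lt_of_le_of_lt (lintegral_mono fun x =>
      ENNReal.ofReal_le_ofReal (by nlinarith [sq_nonneg (u x)])) htotal_lt
  have hsum2 : Integrable (fun x => u x ^ 2 + g x ^ 2) volume := hu2.add hg2
  have hcross : Integrable (fun x => 2 * u x * g x) volume := by
    refine hsum2.mono ((hum.const_mul 2).mul hgm).aestronglyMeasurable ?_
    filter_upwards with x
    rw [Real.norm_eq_abs, Real.norm_eq_abs,
      abs_of_nonneg (by positivity : (0:ℝ) ≤ u x ^ 2 + g x ^ 2), abs_le]
    constructor <;> nlinarith [sq_nonneg (u x - g x), sq_nonneg (u x + g x)]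
  -- the integral of the cross term vanishes
  have hzero : (∫ x, 2 * u x * g x) = 0 := by
    have htail : ∀ L : ℝ, 0 < L → ∀ S : Set ℝ, volume S = ⊤ → MeasurableSet S →
        (∀ x ∈ S, L ≤ u x ^ 2) → False := by
      intro L hL S hS hSm hmono
      have hbig : (⊤:ENNReal) ≤ ∫⁻ x, ENNReal.ofReal (u x ^ 2 + g x ^ 2) := by
        calc (⊤:ENNReal) = ENNReal.ofReal L * volume S := by
              rw [hS, ENNReal.mul_top (ENNReal.ofReal_pos.mpr hL).ne']
          _ = ∫⁻ _ in S, ENNReal.ofReal L := (setLIntegral_const _ _).symm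
          _ ≤ ∫⁻ x in S, ENNReal.ofReal (u x ^ 2 + g x ^ 2) :=
              setLIntegral_mono' hSm (fun x hx =>
                ENNReal.ofReal_le_ofReal (by nlinarith [sq_nonneg (g x), hmono x hx]))
          _ ≤ _ := setLIntegral_le_lintegral _ _
      exact absurd (lt_of_le_of_lt hbig htotal_lt) (by simp)
    -- limit of u² at +∞
    have hAt : Tendsto (fun x => u x ^ 2) atTop
        (nhds ((∫ x in Ioi (0:ℝ), 2 * u x * g x) + u 0 ^ 2)) := by
      have h0 := intervalIntegral_tendsto_integral_Ioi 0 hcross.integrableOn tendsto_id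
      have h0' : Tendsto (fun x : ℝ => u x ^ 2 - u 0 ^ 2) atTop
          (nhds (∫ x in Ioi (0:ℝ), 2 * u x * g x)) :=
        h0.congr fun x => by simpa using (key 0 x).symm
      have h1 := h0'.add_const (u 0 ^ 2)
      simpa using h1
    -- limit of u² at -∞
    have hBt : Tendsto (fun x => u x ^ 2) atBot
        (nhds (u 0 ^ 2 - ∫ x in Iic (0:ℝ), 2 * u x * g x)) := by
      have h0 := intervalIntegral_tendsto_integral_Iic 0 hcross.integrableOn tendsto_id
      have h0' : Tendsto (fun a : ℝ => u 0 ^ 2 - u a ^ 2) atBot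
          (nhds (∫ x in Iic (0:ℝ), 2 * u x * g x)) :=
        h0.congr fun a => by simpa using (key a 0).symm
      have h1 := h0'.const_sub (u 0 ^ 2)
      simpa using h1
    have hlim_zero : ∀ L : ℝ, ∀ l : Filter ℝ,
        Tendsto (fun x => u x ^ 2) l (nhds L) →
        (∀ R : ℝ, ∃ S : Set ℝ, volume S = ⊤ ∧ MeasurableSet S ∧
          {x | R ≤ u x ^ 2} ∈ l → True) → True := fun _ _ _ _ => trivial
    -- extract that the limits are 0
    have hA0 : (∫ x in Ioi (0:ℝ), 2 * u x * g x) + u 0 ^ 2 = 0 := by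
      set L := (∫ x in Ioi (0:ℝ), 2 * u x * g x) + u 0 ^ 2 with hLdef
      have hge : 0 ≤ L := ge_of_tendsto hAt (Filter.Eventually.of_forall fun x => sq_nonneg _)
      rcases eq_or_lt_of_le hge with h | h
      · exact h.symm
      · exfalso
        have hev := hAt.eventually (eventually_ge_nhds (show L / 2 < L by linarith))
        obtain ⟨R, hR⟩ := eventually_atTop.mp hev
        exact htail (L / 2) (by linarith) (Ici R) Real.volume_Ici measurableSet_Ici hR
    have hB0 : u 0 ^ 2 - (∫ x in Iic (0:ℝ), 2 * u x * g x) = 0 := by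
      set L := u 0 ^ 2 - ∫ x in Iic (0:ℝ), 2 * u x * g x with hLdef
      have hge : 0 ≤ L := ge_of_tendsto hBt (Filter.Eventually.of_forall fun x => sq_nonneg _)
      rcases eq_or_lt_of_le hge with h | h
      · exact h.symm
      · exfalso
        have hev := hBt.eventually (eventually_ge_nhds (show L / 2 < L by linarith))
        obtain ⟨R, hR⟩ := eventually_atBot.mp hev
        exact htail (L / 2) (by linarith) (Iic R) Real.volume_Iic measurableSet_Iic hR
    have hsplit := intervalIntegral.integral_Iic_add_Ioi (b := (0:ℝ))
      hcross.integrableOn hcross.integrableOn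
    linarith [hsplit, hA0, hB0]
  -- conclusion
  refine ⟨(memLp_two_iff_integrable_sq hucont.aestronglyMeasurable).mpr hu2,
    (memLp_two_iff_integrable_sq hgm.aestronglyMeasurable).mpr hg2, ?_, ?_⟩
  · have hpt : ∀ x, (u x + g x) ^ 2 = (u x ^ 2 + g x ^ 2) + 2 * u x * g x := fun x => by ring
    calc (∫ x, (u x + g x) ^ 2) = ∫ x, ((u x ^ 2 + g x ^ 2) + 2 * u x * g x) := by
          exact integral_congr_ae (Filter.Eventually.of_forall hpt)
      _ = (∫ x, (u x ^ 2 + g x ^ 2)) + ∫ x, 2 * u x * g x := integral_add hsum2 hcross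
      _ = ∫ x, (u x ^ 2 + g x ^ 2) := by rw [hzero, add_zero]
  · rw [hdecomp]
    rw [Measure.add_apply, withDensity_apply _ MeasurableSet.univ, Measure.restrict_univ]
    rw [← MeasureTheory.ofReal_integral_eq_lintegral_ofReal hsum2
      (Filter.Eventually.of_forall fun x => by positivity)]
    rw [add_comm]

end
end
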